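/- arXiv:1206.0327 — 2 statements merged into one kernel-verified Lean document; each statement's English description precedes it below -/
import Mathlib

section
/- For every alley a ∈ 𝒜 one has φ(δ(a)) = δ(φ(a)), where on the left δ is the difference operator on the span k𝒜 of alleys and φ is extended linearly, and on the right δ is the difference operator on kL_n. -/
set_option maxHeartbeats 1000000

/-! # Common definitions: trees, forests, descent algebras -/

/-- Labeled binary trees: leaves carry a natural number (positive in valid forests),
internal nodes carry a label. -/
inductive LTree : Type
  | leaf : ℕ → LTree
  | node : ℕ → LTree → LTree → LTree
  deriving DecidableEq

instance : Inhabited LTree := ⟨LTree.leaf 1⟩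

/-- Unlabeled binary trees with natural number leaves. -/
inductive UTree : Type
  | leaf : ℕ → UTree
  | node : UTree → UTree → UTree
  deriving DecidableEq

instance : Inhabited UTree := ⟨UTree.leaf 1⟩

namespace LTree

/-- The value of a tree: the sum of its leaf entries. -/
def value : LTree → ℕ
  | leaf x => x
  | node _ t1 t2 => t1.value + t2.value

/-- The foliage of a tree: the list of its leaf entries, left to right. -/
def foliage : LTree → List ℕ
  | leaf x => [x]
  | node _ t1 t2 => t1.foliage ++ t2.foliage

/-- The number of internal nodes. -/
def numNodes : LTree → ℕ
  | leaf _ => 0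
  | node _ t1 t2 => t1.numNodes + t2.numNodes + 1

/-- The list of node labels (in preorder). -/
def labels : LTree → List ℕ
  | leaf _ => []
  | node i t1 t2 => i :: (t1.labels ++ t2.labels)

/-- Labels strictly increase downwards, starting above `p`. -/
def incrFrom : ℕ → LTree → Prop
  | _, leaf _ => True
  | p, node i t1 t2 => p < i ∧ incrFrom i t1 ∧ incrFrom i t2

/-- Shift all node labels up by `m`. -/
def shift (m : ℕ) : LTree → LTree
  | leaf x => leaf x
  | node i t1 t2 => node (i + m) (t1.shift m) (t2.shift m)

/-- Decrease all node labels by one. -/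
def dec : LTree → LTree
  | leaf x => leaf x
  | node i t1 t2 => node (i - 1) t1.dec t2.dec

/-- A tree is aligned if at every node the value of the left subtree is
strictly smaller than the value of the right subtree. -/
def Aligned : LTree → Prop
  | leaf _ => True
  | node _ t1 t2 => t1.value < t2.value ∧ t1.Aligned ∧ t2.Aligned

/-- Replace the leaves of a tree (left to right) by the trees from the supplied list;
returns the new tree together with the unused trees. -/
def graft : LTree → List LTree → LTree × List LTree
  | leaf x, [] => (leaf x, [])
  | leaf _, t :: ts => (t, ts)
  | node i t1 t2, ts =>
    let p1 := t1.graft ts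
    let p2 := t2.graft p1.2
    (node i p1.1 p2.1, p2.2)

/-- Find the node with label `i` and return the values of its two subtrees. -/
def findLab (i : ℕ) : LTree → Option (ℕ × ℕ)
  | leaf _ => none
  | node j t1 t2 =>
    if j = i then some (t1.value, t2.value)
    else (t1.findLab i).orElse (fun _ => t2.findLab i)

/-- The label at the root, if the tree is a node. -/
def rootLabel? : LTree → Option ℕ
  | leaf _ => none
  | node i _ _ => some i

/-- The subtree at a position (list of booleans; `false` = left, `true` = right). -/
def subtreeAt : LTree → List Bool → Option LTree
  | t, [] => some t
  | leaf _, _ :: _ => none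
  | node _ t1 t2, b :: p => (if b then t2 else t1).subtreeAt p

/-- Replace the subtree at a position. -/
def replaceAt : LTree → List Bool → LTree → LTree
  | _, [], u => u
  | leaf x, _ :: _, _ => leaf x
  | node i t1 t2, b :: p, u =>
    if b then node i t1 (t2.replaceAt p u) else node i (t1.replaceAt p u) t2

end LTree

namespace UTree

/-- The value of an unlabeled tree. -/
def value : UTree → ℕ
  | leaf x => x
  | node t1 t2 => t1.value + t2.value

/-- The foliage of an unlabeled tree. -/
def foliage : UTree → List ℕ
  | leaf x => [x]
  | node t1 t2 => t1.foliage ++ t2.foliage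

/-- The number of internal nodes. -/
def numNodes : UTree → ℕ
  | leaf _ => 0
  | node t1 t2 => t1.numNodes + t2.numNodes + 1

/-- All leaf entries are positive. -/
def leavesPos : UTree → Prop
  | leaf x => 0 < x
  | node t1 t2 => t1.leavesPos ∧ t2.leavesPos

/-- An unlabeled tree is aligned if at every node the left value is smaller
than the right value. -/
def Aligned : UTree → Prop
  | leaf _ => True
  | node t1 t2 => t1.value < t2.value ∧ t1.Aligned ∧ t2.Aligned

/-- No node has two leaf children bearing the same value. -/
def NoTwin : UTree → Prop
  | leaf _ => True
  | node t1 t2 => t1.NoTwin ∧ t2.NoTwin ∧ ¬ ∃ a, t1 = leaf a ∧ t2 = leaf a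

/-- Graft: replace leaves (left to right) by trees from the supplied list. -/
def graft : UTree → List UTree → UTree × List UTree
  | leaf x, [] => (leaf x, [])
  | leaf _, t :: ts => (t, ts)
  | node t1 t2, ts =>
    let p1 := t1.graft ts
    let p2 := t2.graft p1.2
    (node p1.1 p2.1, p2.2)

/-- The total order on unlabeled trees: compare values, then (reversed) number of
nodes, then recursively the left and right subtrees. -/
def ltt : UTree → UTree → Prop
  | leaf a, leaf b => a < b
  | leaf a, node y1 y2 => a < (node y1 y2).value
  | node x1 x2, leaf b => (node x1 x2).value ≤ b
  | node x1 x2, node y1 y2 =>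
      (node x1 x2).value < (node y1 y2).value ∨
      ((node x1 x2).value = (node y1 y2).value ∧
        ((node y1 y2).numNodes < (node x1 x2).numNodes ∨
          ((node x1 x2).numNodes = (node y1 y2).numNodes ∧
            (ltt x1 y1 ∨ (x1 = y1 ∧ ltt x2 y2)))))

end UTree

/-- Erase the node labels of a labeled tree. -/
def eraseT : LTree → UTree
  | .leaf x => .leaf x
  | .node _ t1 t2 => .node (eraseT t1) (eraseT t2)

/-! ## Labeled forests -/

/-- The squash of a forest: the list of values of its trees. -/
def squash (X : List LTree) : List ℕ := X.map LTree.value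

/-- The foliage of a forest. -/
def forestFoliage (X : List LTree) : List ℕ := X.flatMap LTree.foliage

/-- The length of a forest: its total number of nodes. -/
def forestLen (X : List LTree) : ℕ := (X.map LTree.numNodes).sum

/-- The value of a forest: the sum of the values of its trees. -/
def forestValue (X : List LTree) : ℕ := (X.map LTree.value).sum

/-- All node labels of a forest. -/
def forestLabels (X : List LTree) : List ℕ := X.flatMap LTree.labels

/-- A list of labeled trees is a labeled forest if every node's label exceeds that
of its parent, the labels used are exactly `1, 2, …, l` where `l` is the number
of nodes, and all leaves are positive. -/
def IsLForest (X : List LTree) : Prop :=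
  (∀ t ∈ X, t.incrFrom 0) ∧
  (forestLabels X).Perm (List.range' 1 (forestLen X)) ∧
  ∀ x ∈ forestFoliage X, 0 < x

/-- A forest is aligned if all its trees are. -/
def ForestAligned (X : List LTree) : Prop := ∀ t ∈ X, t.Aligned

/-- Replace the leaves of the forest `X` (left to right) by the trees of `ys`. -/
def graftForest : List LTree → List LTree → List LTree
  | [], _ => []
  | t :: ts, ys =>
    let p := t.graft ys
    p.1 :: graftForest ts p.2

/-- The product `X • Y` of labeled forests: replace the `i`-th leaf of `X` by the
`i`-th tree of `Y`, after shifting all node labels of `Y` up by `ℓ(X)`.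
(Meaningful when the foliage of `X` equals the squash of `Y`.) -/
def bullet (X Y : List LTree) : List LTree :=
  graftForest X (Y.map (LTree.shift (forestLen X)))

/-- The forest of leaves determined by a composition. -/
def leavesOf (c : List ℕ) : List LTree := c.map LTree.leaf

/-- Iterated product `X₁ • (X₂ • (⋯ • Xₗ))` of a list of forests. -/
def chainProd : List (List LTree) → List LTree
  | [] => []
  | [A] => A
  | A :: F => bullet A (chainProd F)

/-- Find the node with label `i` in a forest; return the values of its subtrees. -/
def forestFindLab (i : ℕ) : List LTree → Option (ℕ × ℕ)
  | [] => none
  | t :: r => (t.findLab i).orElse (fun _ => forestFindLab i r)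

/-! ## Unlabeled forests -/

def squashU (X : List UTree) : List ℕ := X.map UTree.value
def foliageU (X : List UTree) : List ℕ := X.flatMap UTree.foliage
def forestLenU (X : List UTree) : ℕ := (X.map UTree.numNodes).sum
def forestValueU (X : List UTree) : ℕ := (X.map UTree.value).sum

/-- An unlabeled forest is valid when all its leaves are positive. -/
def IsUForest (X : List UTree) : Prop := ∀ x ∈ foliageU X, 0 < x

def ForestAlignedU (X : List UTree) : Prop := ∀ t ∈ X, t.Aligned

def graftForestU : List UTree → List UTree → List UTree
  | [], _ => []
  | t :: ts, ys =>
    let p := t.graft ys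
    p.1 :: graftForestU ts p.2

/-- The product of unlabeled forests (no label adjustment needed). -/
def bulletU (X Y : List UTree) : List UTree := graftForestU X Y

/-- Erase all node labels of a labeled forest. -/
def eraseF (X : List LTree) : List UTree := X.map eraseT
/-! ## The difference operator δ and the map Δ -/

/-- Locate the part of the forest whose root is the node labeled `1`; return its
(0-based) index together with the forest obtained by splitting that part into its
two subtrees. -/
def splitAt1 : List LTree → Option (ℕ × List LTree)
  | [] => none
  | LTree.node i t1 t2 :: rest =>
      if i = 1 then some (0, t1 :: t2 :: rest)
      else (splitAt1 rest).map (fun p => (p.1 + 1, LTree.node i t1 t2 :: p.2))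
  | LTree.leaf x :: rest => (splitAt1 rest).map (fun p => (p.1 + 1, LTree.leaf x :: p.2))

/-- Swap the entries in positions `i` and `i+1` (0-based) of a list. -/
def swapAdj {α : Type} : ℕ → List α → List α
  | 0, a :: b :: r => b :: a :: r
  | n + 1, a :: r => a :: swapAdj n r
  | _, l => l

/-- The difference operator `δ` on the span of labeled forests: if `ℓ(X) = 0` then
`δ(X) = X`; otherwise, if the node labeled 1 is the root of the `i`-th part with
subtrees `X₁, X₂`, then `δ(X) = Y − Y.(i,i+1)` where `Y` is obtained by replacing
the `i`-th part by the parts `X₁ X₂` and decreasing all labels by one. -/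
noncomputable def deltaF (k : Type) [Ring k] (X : List LTree) : (List LTree) →₀ k :=
  match splitAt1 X with
  | none => Finsupp.single X 1
  | some (i, Y) =>
      Finsupp.single (Y.map LTree.dec) 1 - Finsupp.single (swapAdj i (Y.map LTree.dec)) 1

/-- The linear extension of `δ`. -/
noncomputable def deltaLin (k : Type) [Ring k] :
    ((List LTree) →₀ k) →ₗ[k] ((List LTree) →₀ k) :=
  (Finsupp.lift ((List LTree) →₀ k) k (List LTree)) (deltaF k)

/-- `Δ(X) = δ^{ℓ(X)}(X)`, recorded as an element of the free associative algebra
with basis the compositions (identifying a forest of length 0 with its foliage). -/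
noncomputable def DeltaComp (k : Type) [Ring k] (X : List LTree) : (List ℕ) →₀ k :=
  Finsupp.mapDomain forestFoliage
    ((fun v => deltaLin k v)^[forestLen X] (Finsupp.single X 1))

/-- The linear map `Δ : kL → kℕ*`. -/
noncomputable def DeltaMap (k : Type) [Ring k] : ((List LTree) →₀ k) →ₗ[k] ((List ℕ) →₀ k) :=
  (Finsupp.lift ((List ℕ) →₀ k) k (List LTree)) (DeltaComp k)

/-! ## Pólya orbit sums and products on the spans -/

/-- The Pólya orbit sum `[X]` of a labeled forest: the sum of all distinct
rearrangements of its parts. -/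
noncomputable def pol (k : Type) [Semiring k] (X : List LTree) : (List LTree) →₀ k :=
  ∑ Y ∈ X.permutations.toFinset, Finsupp.single Y 1

/-- The Pólya orbit sum of an unlabeled forest. -/
noncomputable def polU (k : Type) [Semiring k] (X : List UTree) : (List UTree) →₀ k :=
  ∑ Y ∈ X.permutations.toFinset, Finsupp.single Y 1

/-- The bilinear product on `kL`: `X • Y` when foliage of `X` equals squash of `Y`,
and `0` otherwise. -/
noncomputable def mulL (k : Type) [Semiring k] (f g : (List LTree) →₀ k) : (List LTree) →₀ k :=
  f.sum fun X a => g.sum fun Y b =>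
    if forestFoliage X = squash Y then Finsupp.single (bullet X Y) (a * b) else 0

/-- The bilinear product on `kM` (unlabeled forests). -/
noncomputable def mulM (k : Type) [Semiring k] (f g : (List UTree) →₀ k) : (List UTree) →₀ k :=
  f.sum fun X a => g.sum fun Y b =>
    if foliageU X = squashU Y then Finsupp.single (bulletU X Y) (a * b) else 0

/-- The concatenation product on `kM`. -/
noncomputable def mulCat (k : Type) [Semiring k] (f g : (List UTree) →₀ k) : (List UTree) →₀ k :=
  f.sum fun X a => g.sum fun Y b => Finsupp.single (X ++ Y) (a * b)

/-- The product on the free associative algebra `kℕ*` (concatenation of compositions). -/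
noncomputable def mulComp (k : Type) [Semiring k] (f g : (List ℕ) →₀ k) : (List ℕ) →₀ k :=
  f.sum fun u a => g.sum fun v b => Finsupp.single (u ++ v) (a * b)

/-- The linear map `E : kL → kM` erasing node labels. -/
noncomputable def EL (k : Type) [Semiring k] : ((List LTree) →₀ k) →ₗ[k] ((List UTree) →₀ k) :=
  Finsupp.lmapDomain k k eraseF

/-- `π` on a single unlabeled tree: replace every node by the Lie bracket. -/
noncomputable def piT (k : Type) [Ring k] : UTree → (List ℕ) →₀ k
  | .leaf x => Finsupp.single [x] 1
  | .node t1 t2 => mulComp k (piT k t1) (piT k t2) - mulComp k (piT k t2) (piT k t1)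

/-- `π` on an unlabeled forest: the concatenation product of the images of its parts. -/
noncomputable def piF (k : Type) [Ring k] (X : List UTree) : (List ℕ) →₀ k :=
  (X.map (piT k)).foldr (mulComp k) (Finsupp.single [] 1)

/-- The Pólya action of a permutation of `Fin j` on a list: the entry in position
`i` of the result is the entry in position `σ⁻¹ i` of the input. -/
def permuteL {α : Type} [Inhabited α] {j : ℕ} (σ : Equiv.Perm (Fin j)) (X : List α) :
    List α :=
  List.ofFn fun i => X.getD ((σ⁻¹ i : Fin j) : ℕ) default
/-! ## The quiver Q, its paths, and the map ι -/

/-- The partition obtained by splitting one part `a+b` into parts `a` and `b`. -/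
def applyStep (a b : ℕ) (p : Multiset ℕ) : Multiset ℕ := a ::ₘ b ::ₘ p.erase (a + b)

/-- The vertex reached from `p` after performing the given splitting steps. -/
def sourceAfter (p : Multiset ℕ) (steps : List (ℕ × ℕ)) : Multiset ℕ :=
  steps.foldl (fun q s => applyStep s.1 s.2 q) p

/-- A path in the quiver `Q`, recorded by its destination vertex (a partition,
i.e. a multiset of parts) together with the list of branch symbols `[aᵢ|bᵢ]`
read from the destination towards the source. -/
structure QPath where
  dest : Multiset ℕ
  steps : List (ℕ × ℕ)
  deriving DecidableEq

/-- Each step is applicable in turn. -/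
def SeqOK : Multiset ℕ → List (ℕ × ℕ) → Prop
  | _, [] => True
  | p, s :: rest => s.1 + s.2 ∈ p ∧ SeqOK (applyStep s.1 s.2 p) rest

/-- A valid path of `Q`: positive parts, each step `[a|b]` has `0 < a < b`, and the
steps apply in sequence. -/
def QPath.Valid (P : QPath) : Prop :=
  (∀ x ∈ P.dest, 0 < x) ∧ (∀ s ∈ P.steps, 0 < s.1 ∧ s.1 < s.2) ∧ SeqOK P.dest P.steps

/-- The source vertex of a path. -/
def QPath.source (P : QPath) : Multiset ℕ := sourceAfter P.dest P.steps

/-- The canonical length-one forest attached to the edge with destination `q`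
splitting a part `a + b` into `a` and `b`. -/
noncomputable def edgeForest (a b : ℕ) (q : Multiset ℕ) : List LTree :=
  LTree.node 1 (LTree.leaf a) (LTree.leaf b) :: leavesOf (q.erase (a + b)).toList

/-- `ι` on the path with destination `p` and branch symbols `steps`:
the product (in `kℒ`) of the orbit sums of the edge forests, with the edge nearest
the destination leftmost, times the orbit sum of the source vertex. -/
noncomputable def iotaSteps (k : Type) [Semiring k] :
    Multiset ℕ → List (ℕ × ℕ) → ((List LTree) →₀ k)
  | p, [] => pol k (leavesOf p.toList)
  | p, s :: rest =>
      mulL k (pol k (edgeForest s.1 s.2 p)) (iotaSteps k (applyStep s.1 s.2 p) rest)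

/-- `ι` of a single path. -/
noncomputable def iotaP (k : Type) [Semiring k] (P : QPath) : (List LTree) →₀ k :=
  iotaSteps k P.dest P.steps

/-- The linear extension `ι : kQ → kℒ`. -/
noncomputable def iotaLinM (k : Type) [Semiring k] : (QPath →₀ k) →ₗ[k] ((List LTree) →₀ k) :=
  (Finsupp.lift ((List LTree) →₀ k) k QPath) (iotaP k)

/-! ## The branch monoid and its actions -/

/-- All ways to replace one leaf of value `a+b` in a tree by a node labeled `lab`
with leaves `a` and `b`. -/
def branchActTree (a b lab : ℕ) : LTree → List LTree
  | .leaf x =>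
      if x = a + b then [LTree.node lab (LTree.leaf a) (LTree.leaf b)] else []
  | .node i t1 t2 =>
      (branchActTree a b lab t1).map (fun u => LTree.node i u t2) ++
      (branchActTree a b lab t2).map (fun u => LTree.node i t1 u)

/-- All ways to replace one leaf of value `a+b` in a forest by a node labeled `lab`. -/
def branchWays (a b lab : ℕ) : List LTree → List (List LTree)
  | [] => []
  | t :: rest =>
      (branchActTree a b lab t).map (· :: rest) ++
      (branchWays a b lab rest).map (t :: ·)

/-- The action of the branch symbol `[a|b]` on `kL`. -/
noncomputable def actL1 (k : Type) [Semiring k] (s : ℕ × ℕ) (x : (List LTree) →₀ k) :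
    (List LTree) →₀ k :=
  x.sum fun X a =>
    a • ((branchWays s.1 s.2 (forestLen X + 1) X).map
      (fun Y => Finsupp.single Y (1 : k))).sum

/-- The action of a word of the branch monoid `ℬ*` on `kL`. -/
noncomputable def actLW (k : Type) [Semiring k] (w : List (ℕ × ℕ)) (x : (List LTree) →₀ k) :
    (List LTree) →₀ k :=
  w.foldl (fun y s => actL1 k s y) x

/-- The action of the branch symbol `[a|b]` on `kQ`: prepend an edge at the source
if the source has a part `a + b`, and `0` otherwise. -/
noncomputable def actQ1 (k : Type) [Semiring k] (s : ℕ × ℕ) (x : QPath →₀ k) : QPath →₀ k :=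
  x.sum fun P a =>
    if s.1 + s.2 ∈ P.source then Finsupp.single ⟨P.dest, P.steps ++ [s]⟩ a else 0

/-- The action of a word of `ℬ*` on `kQ`. -/
noncomputable def actQW (k : Type) [Semiring k] (w : List (ℕ × ℕ)) (x : QPath →₀ k) :
    QPath →₀ k :=
  w.foldl (fun y s => actQ1 k s y) x

/-- The path `𝔭(X)` associated to an (aligned) labeled forest `X`: the destination is
the partition of the squash of `X`, and the `i`-th branch symbol records the values of
the two subtrees of the node labeled `i`. -/
noncomputable def pPath (X : List LTree) : QPath :=
  ⟨(squash X : Multiset ℕ),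
    (List.range (forestLen X)).map fun i => (forestFindLab (i + 1) X).getD (0, 0)⟩
/-! ## The equivalence ∼ on labeled forests -/

/-- The subtree of a forest at a position (part index, path in the part). -/
def forestSubtreeAt (X : List LTree) (q : ℕ × List Bool) : Option LTree :=
  if h : q.1 < X.length then (X.get ⟨q.1, h⟩).subtreeAt q.2 else none

/-- Replace the subtree at a position of a forest. -/
def forestReplaceAt (X : List LTree) (q : ℕ × List Bool) (u : LTree) : List LTree :=
  X.set q.1 ((X.getD q.1 default).replaceAt q.2 u)

/-- The label of the parent node of the position `q`, if it exists. -/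
def parentLabel (X : List LTree) (q : ℕ × List Bool) : Option ℕ :=
  if q.2 = [] then none
  else (forestSubtreeAt X (q.1, q.2.dropLast)).bind LTree.rootLabel?

/-- Two positions address disjoint subtrees. -/
def PosDisjoint (q r : ℕ × List Bool) : Prop :=
  q.1 ≠ r.1 ∨ (q.1 = r.1 ∧ ¬ q.2 <+: r.2 ∧ ¬ r.2 <+: q.2)

/-- Move (1): exchange two disjoint non-leaf subtrees `U`, `V` of equal value such that
the labels of the parents of `U` and `V` (where these exist) are smaller than the root
labels of `U` and `V`. -/
def Move1 (X Y : List LTree) : Prop :=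
  ∃ (q r : ℕ × List Bool) (U V : LTree),
    PosDisjoint q r ∧
    forestSubtreeAt X q = some U ∧ forestSubtreeAt X r = some V ∧
    U.rootLabel?.isSome ∧ V.rootLabel?.isSome ∧
    U.value = V.value ∧
    (∀ m, (parentLabel X q = some m ∨ parentLabel X r = some m) →
      ∀ j, (U.rootLabel? = some j ∨ V.rootLabel? = some j) → m < j) ∧
    Y = forestReplaceAt (forestReplaceAt X q V) r U

/-- Exchange the entries in positions `i` and `j` of a list. -/
def swapEntries (X : List LTree) (i j : ℕ) : List LTree :=
  (X.set i (X.getD j default)).set j (X.getD i default)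

/-- Move (2): exchange two parts of a forest. -/
def Move2 (X Y : List LTree) : Prop :=
  ∃ i j, i < j ∧ j < X.length ∧ Y = swapEntries X i j

/-- The equivalence relation `∼` generated by the two kinds of moves. -/
def SimRel : List LTree → List LTree → Prop :=
  Relation.ReflTransGen (fun A B => Move1 A B ∨ Move2 A B)

/-! ## The labeling map F -/

/-- Preorder labeling of an unlabeled tree, starting after label `s`; returns the
labeled tree and the last label used. -/
def labelTreeAux : ℕ → UTree → LTree × ℕ
  | s, .leaf x => (LTree.leaf x, s)
  | s, .node t1 t2 =>
    let p1 := labelTreeAux (s + 1) t1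
    let p2 := labelTreeAux p1.2 t2
    (LTree.node (s + 1) p1.1 p2.1, p2.2)

def labelFAux : ℕ → List UTree → List LTree
  | _, [] => []
  | s, t :: r =>
    let p := labelTreeAux s t
    p.1 :: labelFAux p.2 r

/-- The labeled forest `F(X)`: label the nodes of each part in prefix (preorder)
order, the nodes of each part receiving smaller labels than those of later parts. -/
def labelF (X : List UTree) : List LTree := labelFAux 0 X

/-! ## Compositions from subsets, and alleys -/

/-- The composition of `n` attached to a subset `J ⊆ {1, …, n−1}`: the list of
successive differences of `{0, n} ∪ (S ∖ J)`. -/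
def phi (n : ℕ) (J : Finset ℕ) : List ℕ :=
  let ts := ((Finset.Icc 1 (n - 1)) \ J).sort (· ≤ ·)
  List.zipWith (fun a b => b - a) (0 :: ts) (ts ++ [n])

/-- The start of the maximal block of consecutive points containing `i` linked by
the transpositions in `J` (the transposition `s` links `s` and `s+1`). -/
def bStart (J : Finset ℕ) : ℕ → ℕ
  | 0 => 0
  | 1 => 1
  | i + 2 => if (i + 1) ∈ J then bStart J (i + 1) else i + 2

/-- The end of the maximal block of consecutive points of `{1, …, n}` containing `i`
linked by the transpositions in `J`. -/
def bEnd (J : Finset ℕ) (n : ℕ) (i : ℕ) : ℕ :=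
  if h : i < n ∧ i ∈ J then bEnd J n (i + 1) else i
termination_by n - i
decreasing_by
  have := h.1
  omega

/-- The longest element `w_J` of the parabolic subgroup `W_J ≤ Sₙ`, described
explicitly as the permutation of `{1, …, n}` reversing each maximal block of
consecutive points linked by the transpositions in `J`. -/
def wJpt (n : ℕ) (J : Finset ℕ) (i : ℕ) : ℕ := bStart J i + bEnd J n i - i

/-- The permutation `ω = w_J ⬝ w_{J ∪ {t}}` (as a right action on points). -/
def omegaPt (n : ℕ) (J : Finset ℕ) (t : ℕ) (i : ℕ) : ℕ :=
  wJpt n (insert t J) (wJpt n J i)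

/-- The conjugate `s^ω` of the Coxeter generator `s` by `ω = w_J w_{J∪{t}}`:
the generator whose transposition exchanges the images of `s` and `s+1`. -/
def conjGen (n : ℕ) (J : Finset ℕ) (t : ℕ) (s : ℕ) : ℕ :=
  min (omegaPt n J t s) (omegaPt n J t (s + 1))

/-- An alley `(J; s₁, …, s_l)`. -/
structure Alley where
  J : Finset ℕ
  s : List ℕ
  deriving DecidableEq

/-- A valid alley for `Sₙ`: `J ⊆ S = {1, …, n−1}` and `s₁, …, s_l` are distinct
elements of `J`. -/
def IsAlley (n : ℕ) (a : Alley) : Prop :=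
  a.J ⊆ Finset.Icc 1 (n - 1) ∧ a.s.Nodup ∧ ∀ x ∈ a.s, x ∈ a.J

/-- The action of the Coxeter generator `t` on an alley:
`(J; s₁, …, s_l).t = (J^ω; s₁^ω, …, s_l^ω)` where `ω = w_J w_{J∪{t}}`. -/
def actAlley (n : ℕ) (t : ℕ) (a : Alley) : Alley :=
  ⟨a.J.image (conjGen n a.J t), a.s.map (conjGen n a.J t)⟩

/-- The action of a word of the free monoid `S*` on alleys. -/
def actWordA (n : ℕ) (a : Alley) (w : List ℕ) : Alley :=
  w.foldl (fun b t => actAlley n t b) a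

/-- The defining property of the forest `φ(a)` attached to an alley `a = (J; s₁,…,s_l)`:
it is a labeled forest of length `l` admitting a factorization `X₁ • ⋯ • X_l` into
length-one forests with `s(Xᵢ) = φ(J ∖ {s₁,…,s_{i−1}})` and
`f(Xᵢ) = φ(J ∖ {s₁,…,sᵢ})`; for `l = 0` it is the forest of leaves `φ(J)`. -/
def AlleySpec (n : ℕ) (a : Alley) (X : List LTree) : Prop :=
  IsLForest X ∧ forestLen X = a.s.length ∧
  ∃ F : List (List LTree), F.length = a.s.length ∧
    (∀ A ∈ F, IsLForest A ∧ forestLen A = 1) ∧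
    (∀ (i : ℕ) (h : i < F.length),
      squash (F.get ⟨i, h⟩) = phi n (a.J \ (a.s.take i).toFinset) ∧
      forestFoliage (F.get ⟨i, h⟩) = phi n (a.J \ (a.s.take (i + 1)).toFinset)) ∧
    X = F.foldr bullet (leavesOf (phi n (a.J \ a.s.toFinset)))
/-! ## The descent algebra of the symmetric group -/

/-- `w ∈ X_J`: every descent of `w` (viewing `w` as a permutation of `{1, …, n}`
via `Fin n`) occurs at a position belonging to `J`. -/
def DescAllowed (n : ℕ) (J : Finset ℕ) (w : Equiv.Perm (Fin n)) : Prop :=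
  ∀ i j : Fin n, (i : ℕ) + 1 = (j : ℕ) → w j < w i → ((i : ℕ) + 1) ∈ J

open Classical in
/-- The element `x_J = ∑_{w ∈ X_J} w` of the group algebra of `Sₙ`. -/
noncomputable def xJelt (k : Type) [Semiring k] (n : ℕ) (J : Finset ℕ) :
    MonoidAlgebra k (Equiv.Perm (Fin n)) :=
  ∑ w : Equiv.Perm (Fin n),
    if DescAllowed n J w then MonoidAlgebra.single w 1 else 0

/-- The descent algebra `Σ(Sₙ)` as a submodule (by Solomon's theorem, a subalgebra)
of the group algebra: the span of the `x_J`, `J ⊆ S`. -/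
noncomputable def descentSpan (k : Type) [Semiring k] (n : ℕ) :
    Submodule k (MonoidAlgebra k (Equiv.Perm (Fin n))) :=
  Submodule.span k {x | ∃ J ⊆ Finset.Icc 1 (n - 1), x = xJelt k n J}

/-! ## Spans -/

/-- `kℒₙ`: the span of Pólya orbit sums of labeled forests of value `n`. -/
noncomputable def LspanN (k : Type) [Semiring k] (n : ℕ) :
    Submodule k ((List LTree) →₀ k) :=
  Submodule.span k {y | ∃ X, IsLForest X ∧ forestValue X = n ∧ y = pol k X}

/-- `kℒ`: the span of Pólya orbit sums of labeled forests. -/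
noncomputable def LspanAll (k : Type) [Semiring k] : Submodule k ((List LTree) →₀ k) :=
  Submodule.span k {y | ∃ X, IsLForest X ∧ y = pol k X}

/-- `kℳ`: the span of Pólya orbit sums of unlabeled forests. -/
noncomputable def MspanAll (k : Type) [Semiring k] : Submodule k ((List UTree) →₀ k) :=
  Submodule.span k {y | ∃ X, IsUForest X ∧ y = polU k X}

/-- `kℒ⁺`: the span of Pólya orbit sums of aligned labeled forests. -/
noncomputable def LplusSpan (k : Type) [Semiring k] : Submodule k ((List LTree) →₀ k) :=
  Submodule.span k {y | ∃ X, IsLForest X ∧ ForestAligned X ∧ y = pol k X}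

/-- `kM⁺`: the span of aligned unlabeled forests. -/
noncomputable def MplusSpan (k : Type) [Semiring k] : Submodule k ((List UTree) →₀ k) :=
  Submodule.span k {y | ∃ X, IsUForest X ∧ ForestAlignedU X ∧ y = Finsupp.single X (1 : k)}

/-- The identity element of `kLₙ`: the sum of all compositions of `n`. -/
noncomputable def unitL (k : Type) [Semiring k] (n : ℕ) : (List LTree) →₀ k :=
  ∑ c : Composition n, Finsupp.single (leavesOf c.blocks) 1

/-- `kQₙ`: the span of the valid paths of the quiver `Qₙ` (partitions of `n`). -/
noncomputable def QspanN (k : Type) [Semiring k] (n : ℕ) : Submodule k (QPath →₀ k) :=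
  Submodule.span k
    {y | ∃ P : QPath, P.Valid ∧ P.dest.sum = n ∧ y = Finsupp.single P 1}

/-- The path-algebra product on `kQ`: the concatenation "`P` then `F`" when the
destination of `P` is the source of `F`, and `0` otherwise. -/
noncomputable def mulQ (k : Type) [Semiring k] (f g : QPath →₀ k) : QPath →₀ k :=
  f.sum fun P a => g.sum fun F b =>
    if F.source = P.dest then Finsupp.single ⟨F.dest, F.steps ++ P.steps⟩ (a * b) else 0

/-! ## The ideals 𝒩 and 𝒥 -/

/-- The generators of the ideal `𝒩`: `(U,V) + (V,U)`. -/
def NGens (k : Type) [Semiring k] : Set ((List UTree) →₀ k) :=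
  {g | ∃ U V : UTree, U.leavesPos ∧ V.leavesPos ∧
    g = Finsupp.single [UTree.node U V] 1 + Finsupp.single [UTree.node V U] 1}

/-- The generators of the ideal `𝒥`: the Jacobi sums
`(X,(Y,Z)) + (Y,(Z,X)) + (Z,(X,Y))`. -/
def JGens (k : Type) [Semiring k] : Set ((List UTree) →₀ k) :=
  {g | ∃ X Y Z : UTree, X.leavesPos ∧ Y.leavesPos ∧ Z.leavesPos ∧
    g = Finsupp.single [UTree.node X (UTree.node Y Z)] 1 +
        Finsupp.single [UTree.node Y (UTree.node Z X)] 1 +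
        Finsupp.single [UTree.node Z (UTree.node X Y)] 1}

/-- The two-sided ideal `𝒩 + 𝒥` of `kM` with respect to concatenation. -/
noncomputable def NJideal (k : Type) [Semiring k] : Submodule k ((List UTree) →₀ k) :=
  Submodule.span k {x | ∃ (A B : List UTree) (g : (List UTree) →₀ k),
    (g ∈ NGens k ∨ g ∈ JGens k) ∧
    x = mulCat k (Finsupp.single A (1 : k)) (mulCat k g (Finsupp.single B 1))}

/-! ## Branch relations -/

/-- The two-term branch relation `[a|b][c|d] − [c|d][a|b]`. -/
noncomputable def Rel1 (k : Type) [Ring k] (a b c d : ℕ) : (List (ℕ × ℕ)) →₀ k :=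
  Finsupp.single [(a, b), (c, d)] 1 - Finsupp.single [(c, d), (a, b)] 1

/-- The three-term branch relation
`[a|b][c|d][x|y] + [x|y][a|b][c|d] − [a|b][x|y][c|d] − [c|d][x|y][a|b]`. -/
noncomputable def Rel2 (k : Type) [Ring k] (a b c d x y : ℕ) : (List (ℕ × ℕ)) →₀ k :=
  Finsupp.single [(a, b), (c, d), (x, y)] 1 + Finsupp.single [(x, y), (a, b), (c, d)] 1
  - Finsupp.single [(a, b), (x, y), (c, d)] 1 - Finsupp.single [(c, d), (x, y), (a, b)] 1

/-- The side condition on `a, b, c, d`: positive, `a < b`, `c < d`,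
`a+b ∉ {c,d}` and `c+d ∉ {a,b}`. -/
def Cond1 (a b c d : ℕ) : Prop :=
  0 < a ∧ a < b ∧ 0 < c ∧ c < d ∧ a + b ≠ c ∧ a + b ≠ d ∧ c + d ≠ a ∧ c + d ≠ b

/-- The set `ℛ ⊆ kℬ*` of branch relations. -/
noncomputable def BranchRels (k : Type) [Ring k] : Set ((List (ℕ × ℕ)) →₀ k) :=
  {r | ∃ a b c d, Cond1 a b c d ∧ r = Rel1 k a b c d} ∪
  {r | ∃ a b c d x y, Cond1 a b c d ∧ 0 < x ∧ x < y ∧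
    ((a + b = c + d ∧ (a + b = x ∨ a + b = y)) ∨
      ((x + y = a ∨ x + y = b) ∧ (x + y = c ∨ x + y = d))) ∧
    r = Rel2 k a b c d x y}
/-! ## Auxiliary development for `delta_coincides` -/

namespace DeltaAux

open LTree

/-- Consecutive pairs of `e :: l ++ [n]`. -/
def pairsOf (n : ℕ) : ℕ → List ℕ → List (ℕ × ℕ)
  | e, [] => [(e, n)]
  | e, x :: l => (e, x) :: pairsOf n x l

/-- Sorted complement of `J` in `{1, …, n−1}`. -/
def sc (n : ℕ) (J : Finset ℕ) : List ℕ := ((Finset.Icc 1 (n - 1)) \ J).sort (· ≤ ·)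

lemma zip_eq_pairs (n : ℕ) : ∀ (l : List ℕ) (e : ℕ),
    List.zipWith (fun a b => b - a) (e :: l) (l ++ [n]) =
      (pairsOf n e l).map (fun p => p.2 - p.1)
  | [], e => rfl
  | x :: l, e => by
      simpa [pairsOf] using zip_eq_pairs n l x

lemma phi_eq (n : ℕ) (J : Finset ℕ) :
    phi n J = (pairsOf n 0 (sc n J)).map (fun p => p.2 - p.1) := by
  unfold phi sc
  exact zip_eq_pairs n _ 0

lemma mem_sc {n : ℕ} {J : Finset ℕ} {x : ℕ} :
    x ∈ sc n J ↔ (x ∈ Finset.Icc 1 (n-1) ∧ x ∉ J) := by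
  simp [sc, Finset.mem_sort, Finset.mem_sdiff]

lemma sc_sorted (n : ℕ) (J : Finset ℕ) : (sc n J).Pairwise (· < ·) :=
  (Finset.sortedLT_sort _).pairwise

lemma getLastD_cases (l : List ℕ) (d : ℕ) : l.getLastD d = d ∨ l.getLastD d ∈ l := by
  have : l.getLastD d ∈ d :: l := List.getLastD_mem_cons
  rcases List.mem_cons.1 this with h | h
  · exact Or.inl h
  · exact Or.inr h

lemma sorted_le_getLastD : ∀ (l : List ℕ) (d x : ℕ), l.Pairwise (· < ·) → x ∈ l →
    x ≤ l.getLastD d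
  | [], _, _, _, hx => by simp at hx
  | a :: l, d, x, hs, hx => by
      rw [List.getLastD_cons]
      rcases List.mem_cons.1 hx with rfl | hx
      · rcases getLastD_cases l x with h | h
        · rw [h]
        · exact le_of_lt ((List.pairwise_cons.1 hs).1 _ h)
      · exact sorted_le_getLastD l a x (List.pairwise_cons.1 hs).2 hx

lemma headD_cases (l : List ℕ) (d : ℕ) : l.headD d = d ∨ l.headD d ∈ l := by
  cases l <;> simp

lemma sorted_headD_le : ∀ (l : List ℕ) (d x : ℕ), l.Pairwise (· < ·) → x ∈ l →
    l.headD d ≤ x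
  | [], _, _, _, hx => by simp at hx
  | a :: l, d, x, hs, hx => by
      rcases List.mem_cons.1 hx with rfl | hx
      · simp
      · exact le_of_lt (by simpa using (List.pairwise_cons.1 hs).1 x hx)

lemma split_uniq {α : Type} (P : α → Prop) : ∀ (l₁ l₁' l₂ l₂' : List α),
    l₁ ++ l₂ = l₁' ++ l₂' → (∀ x ∈ l₁, P x) → (∀ x ∈ l₂, ¬ P x) →
    (∀ x ∈ l₁', P x) → (∀ x ∈ l₂', ¬ P x) → l₁ = l₁' ∧ l₂ = l₂'
  | [], [], l₂, l₂', h, _, _, _, _ => ⟨rfl, by simpa using h⟩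
  | [], a :: l₁', l₂, l₂', h, h1, h2, h3, h4 => by
      exact absurd (h3 a (by simp)) (h2 a (by simp only [List.nil_append] at h; rw [h]; exact List.mem_cons_self))
  | a :: l₁, [], l₂, l₂', h, h1, h2, h3, h4 => by
      exact absurd (h1 a (by simp)) (h4 a (by simp only [List.nil_append] at h; rw [← h]; exact List.mem_cons_self))
  | a :: l₁, b :: l₁', l₂, l₂', h, h1, h2, h3, h4 => by
      simp only [List.cons_append, List.cons.injEq] at h
      obtain ⟨rfl, h⟩ := h
      obtain ⟨h5, h6⟩ := split_uniq P l₁ l₁' l₂ l₂' h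
        (fun x hx => h1 x (by simp [hx])) h2 (fun x hx => h3 x (by simp [hx])) h4
      exact ⟨by rw [h5], h6⟩

lemma sort_insert {C : Finset ℕ} {t : ℕ} (ht : t ∉ C) :
    ∃ l₁ l₂ : List ℕ,
      (insert t C).sort (· ≤ ·) = l₁ ++ t :: l₂ ∧
      C.sort (· ≤ ·) = l₁ ++ l₂ ∧
      l₁.Pairwise (· < ·) ∧ l₂.Pairwise (· < ·) ∧
      (∀ x ∈ l₁, x < t) ∧ (∀ x ∈ l₂, t < x) := by
  have hmem : t ∈ (insert t C).sort (· ≤ ·) := by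
    simp [Finset.mem_sort]
  obtain ⟨l₁, l₂, h⟩ := List.append_of_mem hmem
  have hsorted : ((insert t C).sort (· ≤ ·)).Pairwise (· < ·) := (Finset.sortedLT_sort _).pairwise
  rw [h] at hsorted
  have hsorted' := List.pairwise_append.1 hsorted
  obtain ⟨hs1, hs2, hs3⟩ := hsorted'
  have hs2' := List.pairwise_cons.1 hs2
  refine ⟨l₁, l₂, h, ?_, hs1, hs2'.2, fun x hx => hs3 x hx t (by simp), hs2'.1⟩
  have hperm : List.Perm ((insert t C).sort (· ≤ ·)) (t :: C.sort (· ≤ ·)) := by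
    refine ((Finset.sort_perm_toList _ _).trans (Finset.toList_insert ht)).trans ?_
    exact List.Perm.cons t (Finset.sort_perm_toList _ _).symm
  rw [h] at hperm
  have hperm2 : List.Perm (t :: (l₁ ++ l₂)) (t :: C.sort (· ≤ ·)) :=
    List.Perm.trans List.perm_middle.symm hperm
  have hperm3 := hperm2.cons_inv
  have hsort1 : (l₁ ++ l₂).Pairwise (· < ·) := by
    refine List.pairwise_append.2 ⟨hs1, hs2'.2, ?_⟩
    exact fun x hx y hy => lt_trans (hs3 x hx t (by simp)) (hs2'.1 y hy)
  have hsort1le : (l₁ ++ l₂).Pairwise (· ≤ ·) := hsort1.imp (fun h => le_of_lt h)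
  exact (List.Perm.eq_of_pairwise' hsort1le (Finset.pairwise_sort _ _) hperm3).symm

lemma pairsOf_first_ge (n : ℕ) : ∀ (l : List ℕ) (e : ℕ), l.Pairwise (· < ·) →
    (∀ y ∈ l, e ≤ y) → ∀ p ∈ pairsOf n e l, e ≤ p.1
  | [], e, _, _, p, hp => by
      simp only [pairsOf, List.mem_singleton] at hp
      simp [hp]
  | x :: l, e, hs, h, p, hp => by
      simp only [pairsOf, List.mem_cons] at hp
      rcases hp with rfl | hp
      · exact le_refl e
      · exact le_trans (h x (by simp))
          (pairsOf_first_ge n l x (List.pairwise_cons.1 hs).2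
            (fun y hy => le_of_lt ((List.pairwise_cons.1 hs).1 y hy)) p hp)

lemma pairs_split (n t : ℕ) (l₂ : List ℕ) (hl₂ : l₂.Pairwise (· < ·)) :
    ∀ (l₁ : List ℕ) (e : ℕ), l₁.Pairwise (· < ·) →
    ∃ A B : List (ℕ × ℕ),
      pairsOf n e (l₁ ++ l₂) = A ++ (l₁.getLastD e, l₂.headD n) :: B ∧
      pairsOf n e (l₁ ++ t :: l₂) = A ++ (l₁.getLastD e, t) :: (t, l₂.headD n) :: B ∧
      A.length = l₁.length ∧
      (∀ p ∈ A, p.2 ≤ l₁.getLastD e) ∧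
      (∀ p ∈ B, l₂.headD n ≤ p.1)
  | [], e, _ => by
      cases l₂ with
      | nil =>
          refine ⟨[], [], rfl, rfl, rfl, ?_, ?_⟩ <;>
            · intro p hp; exact absurd hp (List.not_mem_nil)
      | cons x l =>
          refine ⟨[], pairsOf n x l, rfl, rfl, rfl, ?_, ?_⟩
          · intro p hp; exact absurd hp (List.not_mem_nil)
          · intro p hp
            exact pairsOf_first_ge n l x (List.pairwise_cons.1 hl₂).2
              (fun y hy => le_of_lt ((List.pairwise_cons.1 hl₂).1 y hy)) p hp
  | x :: l₁, e, hs => by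
      obtain ⟨A, B, h1, h2, h3, h4, h5⟩ :=
        pairs_split n t l₂ hl₂ l₁ x (List.pairwise_cons.1 hs).2
      have hgl : x ≤ l₁.getLastD x := by
        rcases getLastD_cases l₁ x with h | h
        · rw [h]
        · exact le_of_lt ((List.pairwise_cons.1 hs).1 _ h)
      refine ⟨(e, x) :: A, B, ?_, ?_, by simp [h3], ?_, h5⟩
      · show pairsOf n e (x :: (l₁ ++ l₂)) = _
        rw [pairsOf, h1, List.getLastD_cons]
        rfl
      · show pairsOf n e (x :: (l₁ ++ t :: l₂)) = _
        rw [pairsOf, h2, List.getLastD_cons]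
        rfl
      · intro p hp
        rw [List.getLastD_cons]
        rcases List.mem_cons.1 hp with rfl | hp
        · exact hgl
        · exact h4 p hp

end DeltaAux
namespace DeltaAux

/-! ### Block structure lemmas for `bStart`, `bEnd`, `wJpt` -/

lemma bStart_le (J : Finset ℕ) : ∀ i, bStart J i ≤ i
  | 0 => le_refl _
  | 1 => le_refl _
  | (i+2) => by
      simp only [bStart]
      split
      · exact le_trans (bStart_le J (i+1)) (by omega)
      · exact le_refl _

lemma bStart_pos (J : Finset ℕ) : ∀ i, 1 ≤ i → 1 ≤ bStart J i
  | 0, h => absurd h (by omega)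
  | 1, _ => le_refl _
  | (i+2), _ => by
      simp only [bStart]
      split
      · exact bStart_pos J (i+1) (by omega)
      · omega

lemma bStart_mem (J : Finset ℕ) : ∀ i w, bStart J i ≤ w → w < i → w ∈ J
  | 0, w, h1, h2 => absurd h2 (by omega)
  | 1, w, h1, h2 => by simp only [bStart] at h1; omega
  | (i+2), w, h1, h2 => by
      simp only [bStart] at h1
      split at h1
      · rename_i hmem
        rcases Nat.lt_or_ge w (i+1) with hw | hw
        · exact bStart_mem J (i+1) w h1 hw
        · have : w = i + 1 := by omega
          exact this ▸ hmem
      · omega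

lemma bStart_boundary (J : Finset ℕ) : ∀ i, bStart J i ≤ 1 ∨ (bStart J i - 1) ∉ J
  | 0 => Or.inl (by simp [bStart])
  | 1 => Or.inl (le_refl _)
  | (i+2) => by
      simp only [bStart]
      split
      · exact bStart_boundary J (i+1)
      · rename_i hmem
        right
        simpa using hmem

lemma bStart_eq (J : Finset ℕ) : ∀ i u, 1 ≤ u → u ≤ i →
    (∀ w, u ≤ w → w < i → w ∈ J) → (u = 1 ∨ (u-1) ∉ J) → bStart J i = u
  | 0, u, h1, h2, _, _ => by omega
  | 1, u, h1, h2, _, _ => by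
      have : u = 1 := by omega
      simp [bStart, this]
  | (i+2), u, h1, h2, h3, h4 => by
      by_cases hmem : (i+1) ∈ J
      · simp only [bStart, if_pos hmem]
        refine bStart_eq J (i+1) u h1 ?_ (fun w hw1 hw2 => h3 w hw1 (by omega)) h4
        rcases h4 with h4 | h4
        · omega
        · by_contra hc
          have : u = i + 2 := by omega
          exact h4 (by rw [this]; simpa using hmem)
      · simp only [bStart, if_neg hmem]
        by_contra hc
        have : u ≤ i + 1 := by omega
        exact hmem (h3 (i+1) (by omega) (by omega))

lemma bEnd_ge (J : Finset ℕ) (n i : ℕ) : i ≤ bEnd J n i := by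
  rw [bEnd]
  split
  · rename_i h
    have := bEnd_ge J n (i+1)
    omega
  · exact le_refl _
termination_by n - i
decreasing_by rename_i h; have := h.1; omega

lemma bEnd_le (J : Finset ℕ) (n i : ℕ) (hin : i ≤ n) : bEnd J n i ≤ n := by
  rw [bEnd]
  split
  · rename_i h
    exact bEnd_le J n (i+1) (by omega)
  · exact hin
termination_by n - i
decreasing_by rename_i h; have := h.1; omega

lemma bEnd_mem (J : Finset ℕ) (n i w : ℕ) (h1 : i ≤ w) (h2 : w < bEnd J n i) :
    w ∈ J ∧ w < n := by
  rw [bEnd] at h2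
  split at h2
  · rename_i h
    rcases eq_or_lt_of_le h1 with rfl | hlt
    · exact ⟨h.2, h.1⟩
    · exact bEnd_mem J n (i+1) w (by omega) h2
  · omega
termination_by n - i
decreasing_by rename_i h; have := h.1; omega

lemma bEnd_stop (J : Finset ℕ) (n i : ℕ) : ¬(bEnd J n i < n ∧ bEnd J n i ∈ J) := by
  rw [bEnd]
  split
  · rename_i h
    exact bEnd_stop J n (i+1)
  · rename_i h
    exact h
termination_by n - i
decreasing_by rename_i h; have := h.1; omega

lemma bEnd_le_stop (J : Finset ℕ) (n i z : ℕ) (h1 : i ≤ z) (hz : z ∉ J) :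
    bEnd J n i ≤ z := by
  rw [bEnd]
  split
  · rename_i h
    have : i ≠ z := fun he => hz (he ▸ h.2)
    exact bEnd_le_stop J n (i+1) z (by omega) hz
  · exact h1
termination_by n - i
decreasing_by rename_i h; have := h.1; omega

lemma bEnd_eq (J : Finset ℕ) (n : ℕ) (i v : ℕ) (h1 : i ≤ v) (h2 : v ≤ n)
    (h3 : ∀ w, i ≤ w → w < v → w ∈ J) (h4 : v = n ∨ v ∉ J) : bEnd J n i = v := by
  rw [bEnd]
  split
  · rename_i h
    have hne : i ≠ v := by
      rcases h4 with h4 | h4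
      · omega
      · intro he; exact h4 (he ▸ h.2)
    exact bEnd_eq J n (i+1) v (by omega) h2 (fun w hw1 hw2 => h3 w (by omega) hw2) h4
  · rename_i h
    by_contra hc
    have hiv : i < v := by omega
    exact h ⟨by omega, h3 i (le_refl i) hiv⟩
termination_by v - i
decreasing_by omega

lemma wJpt_eq (n : ℕ) (J : Finset ℕ) (i u v : ℕ) (h0 : 1 ≤ u) (h1 : u ≤ i)
    (h2 : i ≤ v) (h2n : v ≤ n) (hblk : ∀ w, u ≤ w → w < v → w ∈ J)
    (hub : u = 1 ∨ (u-1) ∉ J) (hvb : v = n ∨ v ∉ J) : wJpt n J i = u + v - i := by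
  unfold wJpt
  rw [bStart_eq J i u h0 h1 (fun w hw1 hw2 => hblk w hw1 (by omega)) hub,
      bEnd_eq J n i v h2 h2n (fun w hw1 hw2 => hblk w (by omega) hw2) hvb]

/-! ### The gap setting and evaluation of `conjGen` -/

structure Gap (n : ℕ) (K : Finset ℕ) (t e f : ℕ) : Prop where
  hK : K ⊆ Finset.Icc 1 (n-1)
  htI : t ∈ Finset.Icc 1 (n-1)
  htK : t ∉ K
  het : e < t
  htf : t < f
  hfn : f ≤ n
  hint : ∀ w, e < w → w < f → w ≠ t → w ∈ K
  heb : e = 0 ∨ e ∉ K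
  hfb : f = n ∨ f ∉ K

namespace Gap

variable {n : ℕ} {K : Finset ℕ} {t e f : ℕ}

lemma ht1 (h : Gap n K t e f) : 1 ≤ t ∧ t ≤ n - 1 := Finset.mem_Icc.1 h.htI

lemma hn2 (h : Gap n K t e f) : 2 ≤ n := by have := h.ht1; omega

lemma omega_low (h : Gap n K t e f) (i : ℕ) (hi1 : 1 ≤ i) (hie : i ≤ e) :
    omegaPt n K t i = i := by
  have heK : e ∉ K := by
    rcases h.heb with h' | h'
    · omega
    · exact h'
  have hu1 : 1 ≤ bStart K i := bStart_pos K i hi1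
  have hui : bStart K i ≤ i := bStart_le K i
  have hub : bStart K i = 1 ∨ (bStart K i - 1) ∉ K := by
    rcases bStart_boundary K i with h' | h'
    · left; omega
    · right; exact h'
  have hiv : i ≤ bEnd K n i := bEnd_ge K n i
  have hve : bEnd K n i ≤ e := bEnd_le_stop K n i e hie heK
  have ht1 := h.ht1
  have het := h.het
  have htf := h.htf
  have hfn := h.hfn
  have hblkK : ∀ w, bStart K i ≤ w → w < bEnd K n i → w ∈ K := by
    intro w hw1 hw2
    rcases Nat.lt_or_ge w i with hwi | hwi
    · exact bStart_mem K i w hw1 hwi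
    · exact (bEnd_mem K n i w hwi hw2).1
  have hvb : bEnd K n i = n ∨ bEnd K n i ∉ K := by
    right
    intro hm
    exact bEnd_stop K n i ⟨by omega, hm⟩
  set u := bStart K i
  set v := bEnd K n i
  have h5 : wJpt n K i = u + v - i := wJpt_eq n K i u v hu1 hui hiv (by omega) hblkK hub hvb
  have h6 : wJpt n (insert t K) (u + v - i) = u + v - (u + v - i) := by
    refine wJpt_eq n (insert t K) (u+v-i) u v hu1 (by omega) (by omega) (by omega)
      (fun w hw1 hw2 => Finset.mem_insert_of_mem (hblkK w hw1 hw2)) ?_ ?_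
    · rcases hub with h' | h'
      · exact Or.inl h'
      · right
        simp only [Finset.mem_insert, not_or]
        exact ⟨by omega, h'⟩
    · rcases hvb with h' | h'
      · exact Or.inl h'
      · right
        simp only [Finset.mem_insert, not_or]
        exact ⟨by omega, h'⟩
  unfold omegaPt
  rw [h5, h6]
  omega

lemma omega_high (h : Gap n K t e f) (i : ℕ) (hi1 : f + 1 ≤ i) (hin : i ≤ n) :
    omegaPt n K t i = i := by
  have hfK : f ∉ K := by
    rcases h.hfb with h' | h'
    · omega
    · exact h'
  have ht1 := h.ht1
  have het := h.het
  have htf := h.htf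
  have hfn := h.hfn
  have hu1 : 1 ≤ bStart K i := bStart_pos K i (by omega)
  have hui : bStart K i ≤ i := bStart_le K i
  have huf : f + 1 ≤ bStart K i := by
    by_contra hc
    exact hfK (bStart_mem K i f (by omega) (by omega))
  have hub : bStart K i = 1 ∨ (bStart K i - 1) ∉ K := by
    rcases bStart_boundary K i with h' | h'
    · left; omega
    · right; exact h'
  have hiv : i ≤ bEnd K n i := bEnd_ge K n i
  have hvn : bEnd K n i ≤ n := bEnd_le K n i hin
  have hblkK : ∀ w, bStart K i ≤ w → w < bEnd K n i → w ∈ K := by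
    intro w hw1 hw2
    rcases Nat.lt_or_ge w i with hwi | hwi
    · exact bStart_mem K i w hw1 hwi
    · exact (bEnd_mem K n i w hwi hw2).1
  have hvb : bEnd K n i = n ∨ bEnd K n i ∉ K := by
    by_cases hv : bEnd K n i < n
    · right; intro hm; exact bEnd_stop K n i ⟨hv, hm⟩
    · left; omega
  set u := bStart K i
  set v := bEnd K n i
  have h5 : wJpt n K i = u + v - i := wJpt_eq n K i u v hu1 hui hiv hvn hblkK hub hvb
  have h6 : wJpt n (insert t K) (u + v - i) = u + v - (u + v - i) := by
    refine wJpt_eq n (insert t K) (u+v-i) u v hu1 (by omega) (by omega) hvn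
      (fun w hw1 hw2 => Finset.mem_insert_of_mem (hblkK w hw1 hw2)) ?_ ?_
    · rcases hub with h' | h'
      · exact Or.inl h'
      · right
        simp only [Finset.mem_insert, not_or]
        exact ⟨by omega, h'⟩
    · rcases hvb with h' | h'
      · exact Or.inl h'
      · right
        simp only [Finset.mem_insert, not_or]
        exact ⟨by omega, h'⟩
  unfold omegaPt
  rw [h5, h6]
  omega

lemma omega_midL (h : Gap n K t e f) (i : ℕ) (h1 : e + 1 ≤ i) (h2 : i ≤ t) :
    omegaPt n K t i = i + (f - t) := by
  have ht1 := h.ht1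
  have het := h.het
  have htf := h.htf
  have hfn := h.hfn
  have h5 : wJpt n K i = (e+1) + t - i := by
    refine wJpt_eq n K i (e+1) t (by omega) h1 h2 (by omega)
      (fun w hw1 hw2 => h.hint w (by omega) (by omega) (by omega)) ?_ (Or.inr h.htK)
    rcases h.heb with h' | h'
    · left; omega
    · right; simpa using h'
  have h6 : wJpt n (insert t K) ((e+1) + t - i) = (e+1) + f - ((e+1) + t - i) := by
    refine wJpt_eq n (insert t K) _ (e+1) f (by omega) (by omega) (by omega) h.hfn ?_ ?_ ?_
    · intro w hw1 hw2
      by_cases hw : w = t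
      · exact hw ▸ Finset.mem_insert_self t K
      · exact Finset.mem_insert_of_mem (h.hint w (by omega) hw2 hw)
    · rcases h.heb with h' | h'
      · left; omega
      · right
        simp only [Finset.mem_insert, not_or]
        have := h.het
        exact ⟨by omega, by simpa using h'⟩
    · rcases h.hfb with h' | h'
      · exact Or.inl h'
      · right
        simp only [Finset.mem_insert, not_or]
        have := h.htf
        exact ⟨by omega, h'⟩
  unfold omegaPt
  rw [h5, h6]
  omega

lemma omega_midR (h : Gap n K t e f) (i : ℕ) (h1 : t + 1 ≤ i) (h2 : i ≤ f) :
    omegaPt n K t i = i - (t - e) := by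
  have ht1 := h.ht1
  have het := h.het
  have htf := h.htf
  have hfn := h.hfn
  have h5 : wJpt n K i = (t+1) + f - i := by
    refine wJpt_eq n K i (t+1) f (by omega) h1 h2 h.hfn
      (fun w hw1 hw2 => h.hint w (by omega) (by omega) (by omega)) ?_ h.hfb
    right; simpa using h.htK
  have h6 : wJpt n (insert t K) ((t+1) + f - i) = (e+1) + f - ((t+1) + f - i) := by
    refine wJpt_eq n (insert t K) _ (e+1) f (by omega) (by omega) (by omega) h.hfn ?_ ?_ ?_
    · intro w hw1 hw2
      by_cases hw : w = t
      · exact hw ▸ Finset.mem_insert_self t K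
      · exact Finset.mem_insert_of_mem (h.hint w (by omega) hw2 hw)
    · rcases h.heb with h' | h'
      · left; omega
      · right
        simp only [Finset.mem_insert, not_or]
        have := h.het
        exact ⟨by omega, by simpa using h'⟩
    · rcases h.hfb with h' | h'
      · exact Or.inl h'
      · right
        simp only [Finset.mem_insert, not_or]
        have := h.htf
        exact ⟨by omega, h'⟩
  unfold omegaPt
  rw [h5, h6]
  omega

lemma conj_val (h : Gap n K t e f) (s : ℕ) (hs : s ∈ K) :
    conjGen n K t s =
      if s ≤ e then s else if s < t then s + (f - t)
      else if s < f then s - (t - e) else s := by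
  have hsI := Finset.mem_Icc.1 (h.hK hs)
  have hst : s ≠ t := fun h' => h.htK (h' ▸ hs)
  have ht1 := h.ht1
  have het := h.het
  have htf := h.htf
  have hfn := h.hfn
  unfold conjGen
  by_cases c1 : s ≤ e
  · have hse : s < e := by
      rcases h.heb with h' | h'
      · omega
      · rcases eq_or_lt_of_le c1 with rfl | h''
        · exact absurd hs h'
        · exact h''
    rw [omega_low h s (by omega) (by omega), omega_low h (s+1) (by omega) (by omega),
        if_pos c1]
    omega
  · by_cases c2 : s < t
    · rw [omega_midL h s (by omega) (by omega), omega_midL h (s+1) (by omega) (by omega),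
          if_neg c1, if_pos c2]
      omega
    · by_cases c3 : s < f
      · rw [omega_midR h s (by omega) (by omega), omega_midR h (s+1) (by omega) (by omega),
            if_neg c1, if_neg c2, if_pos c3]
        omega
      · have hsf : f + 1 ≤ s := by
          rcases h.hfb with h' | h'
          · omega
          · rcases Nat.lt_or_ge f s with h'' | h''
            · omega
            · have : s = f := by omega
              exact absurd (this ▸ hs) h'
        rw [omega_high h s (by omega) (by omega), omega_high h (s+1) (by omega) (by omega),
            if_neg c1, if_neg c2, if_neg c3]
        omega

lemma q'_lt (h : Gap n K t e f) : e < e + (f - t) ∧ e + (f - t) < f := by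
  have := h.het; have := h.htf
  omega

lemma q'_mem (h : Gap n K t e f) : e + (f - t) ∈ insert t K := by
  have h1 := h.q'_lt
  by_cases hq : e + (f - t) = t
  · rw [hq]; exact Finset.mem_insert_self t K
  · exact Finset.mem_insert_of_mem (h.hint _ h1.1 h1.2 hq)

lemma image_conj (h : Gap n K t e f) :
    K.image (conjGen n K t) = (insert t K).erase (e + (f - t)) := by
  have ht1 := h.ht1
  have het := h.het
  have htf := h.htf
  have hfn := h.hfn
  have het := h.het
  have htf := h.htf
  ext x
  simp only [Finset.mem_image, Finset.mem_erase, Finset.mem_insert]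
  constructor
  · rintro ⟨s, hs, rfl⟩
    have hsI := Finset.mem_Icc.1 (h.hK hs)
    have hst : s ≠ t := fun h' => h.htK (h' ▸ hs)
    rw [conj_val h s hs]
    split_ifs with c1 c2 c3
    · exact ⟨by omega, Or.inr hs⟩
    · refine ⟨by omega, ?_⟩
      by_cases hx : s + (f - t) = t
      · exact Or.inl hx
      · exact Or.inr (h.hint _ (by omega) (by omega) hx)
    · refine ⟨by omega, ?_⟩
      by_cases hx : s - (t - e) = t
      · exact Or.inl hx
      · exact Or.inr (h.hint _ (by omega) (by omega) hx)
    · exact ⟨by omega, Or.inr hs⟩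
  · rintro ⟨hne, hx⟩
    have hxI : 1 ≤ x ∧ x ≤ n - 1 := by
      rcases hx with rfl | hx
      · exact ⟨by omega, by omega⟩
      · exact ⟨(Finset.mem_Icc.1 (h.hK hx)).1, (Finset.mem_Icc.1 (h.hK hx)).2⟩
    by_cases c1 : x ≤ e
    · have hxK : x ∈ K := by
        rcases hx with rfl | hx
        · omega
        · exact hx
      exact ⟨x, hxK, by rw [conj_val h x hxK, if_pos c1]⟩
    · by_cases c2 : x < f
      · by_cases c3 : x < e + (f - t)
        · refine ⟨x + (t - e), h.hint _ (by omega) (by omega) (by omega), ?_⟩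
          rw [conj_val h _ (h.hint _ (by omega) (by omega) (by omega))]
          rw [if_neg (by omega), if_neg (by omega), if_pos (by omega)]
          omega
        · refine ⟨x - (f - t), h.hint _ (by omega) (by omega) (by omega), ?_⟩
          rw [conj_val h _ (h.hint _ (by omega) (by omega) (by omega))]
          rw [if_neg (by omega), if_pos (by omega)]
          omega
      · have hxK : x ∈ K := by
          rcases hx with rfl | hx
          · omega
          · exact hx
        refine ⟨x, hxK, ?_⟩
        rw [conj_val h x hxK, if_neg c1, if_neg (by omega), if_neg c2]

lemma conj_injOn (h : Gap n K t e f) : Set.InjOn (conjGen n K t) ↑K := by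
  have hq'm := h.q'_mem
  have hcard : (K.image (conjGen n K t)).card = K.card := by
    rw [h.image_conj, Finset.card_erase_of_mem hq'm,
        Finset.card_insert_of_notMem h.htK]
    omega
  exact Finset.injOn_of_card_image_eq hcard

end Gap

end DeltaAux
namespace DeltaAux

/-! ### Canonical forests -/

/-- The unique length-one labeled forest with squash `c` and foliage `d`. -/
def stepF : List ℕ → List ℕ → List LTree
  | x :: c, y :: d =>
    if x = y then LTree.leaf x :: stepF c d
    else
      match d with
      | z :: d' => LTree.node 1 (LTree.leaf y) (LTree.leaf z) :: leavesOf d'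
      | [] => []
  | _, _ => []

/-- The canonical forest of an alley, defined recursively. -/
def canonA (n : ℕ) : Finset ℕ → List ℕ → List LTree
  | J, [] => leavesOf (phi n J)
  | J, s :: r => bullet (stepF (phi n J) (phi n (J.erase s))) (canonA n (J.erase s) r)

/-- Build the tree over the interval `(e, f]` determined by the splitting points. -/
def buildT : ℕ → ℕ → List (ℕ × ℕ) → LTree
  | e, f, [] => LTree.leaf (f - e)
  | e, f, (i, s) :: r =>
      if e < s ∧ s < f then LTree.node i (buildT e s r) (buildT s f r)
      else buildT e f r

/-- Indexing of a list, starting at `k`. -/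
def idxL : ℕ → List ℕ → List (ℕ × ℕ)
  | _, [] => []
  | k, s :: r => (k, s) :: idxL (k+1) r

/-- The canonical forest, in explicit interval form. -/
def canonE (n : ℕ) (K : Finset ℕ) (r : List ℕ) : List LTree :=
  (pairsOf n 0 (sc n K)).map (fun ef => buildT ef.1 ef.2 (idxL 1 r))

lemma buildT_cons (e f i s : ℕ) (l : List (ℕ × ℕ)) :
    buildT e f ((i, s) :: l) =
      if e < s ∧ s < f then LTree.node i (buildT e s l) (buildT s f l)
      else buildT e f l := rfl

lemma idxL_succ : ∀ (r : List ℕ) (k : ℕ),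
    idxL (k+1) r = (idxL k r).map (fun p => (p.1 + 1, p.2))
  | [], _ => rfl
  | s :: r, k => by simp [idxL, idxL_succ r (k+1)]

lemma idxL_map (g : ℕ → ℕ) : ∀ (r : List ℕ) (k : ℕ),
    idxL k (r.map g) = (idxL k r).map (fun p => (p.1, g p.2))
  | [], _ => rfl
  | s :: r, k => by simp [idxL, idxL_map g r (k+1)]

lemma idxL_fst_ge : ∀ (r : List ℕ) (k : ℕ) (p : ℕ × ℕ), p ∈ idxL k r → k ≤ p.1
  | [], _, _, hp => absurd hp List.not_mem_nil
  | s :: r, k, p, hp => by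
      simp only [idxL, List.mem_cons] at hp
      rcases hp with rfl | hp
      · exact le_refl k
      · exact le_trans (by omega) (idxL_fst_ge r (k+1) p hp)

lemma buildT_shiftlab : ∀ (l : List (ℕ × ℕ)) (e f : ℕ),
    buildT e f (l.map (fun p => (p.1 + 1, p.2))) = LTree.shift 1 (buildT e f l)
  | [], e, f => rfl
  | (i, s) :: l, e, f => by
      simp only [List.map_cons]
      by_cases hc : e < s ∧ s < f
      · rw [buildT_cons, buildT_cons, if_pos hc, if_pos hc]
        simp [LTree.shift, buildT_shiftlab l e s, buildT_shiftlab l s f]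
      · rw [buildT_cons, buildT_cons, if_neg hc, if_neg hc]
        exact buildT_shiftlab l e f

lemma buildT_congr2 (h₁ h₂ : ℕ → ℕ) : ∀ (l : List (ℕ × ℕ)) (e f : ℕ),
    (∀ p ∈ l, h₁ p.2 = h₂ p.2 ∨
      (¬(e < h₁ p.2 ∧ h₁ p.2 < f) ∧ ¬(e < h₂ p.2 ∧ h₂ p.2 < f))) →
    buildT e f (l.map (fun p => (p.1, h₁ p.2))) = buildT e f (l.map (fun p => (p.1, h₂ p.2)))
  | [], _, _, _ => rfl
  | (i, s) :: l, e, f, hcond => by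
      have hhead := hcond (i, s) (by simp)
      have htail : ∀ p ∈ l, h₁ p.2 = h₂ p.2 ∨
          (¬(e < h₁ p.2 ∧ h₁ p.2 < f) ∧ ¬(e < h₂ p.2 ∧ h₂ p.2 < f)) :=
        fun p hp => hcond p (List.mem_cons_of_mem _ hp)
      simp only [List.map_cons]
      rcases hhead with heq | hout
      · simp only at heq
        rw [heq]
        by_cases hc : e < h₂ s ∧ h₂ s < f
        · rw [buildT_cons, buildT_cons, if_pos hc, if_pos hc]
          have hL := buildT_congr2 h₁ h₂ l e (h₂ s) (by
            intro p hp
            rcases htail p hp with h | h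
            · exact Or.inl h
            · exact Or.inr ⟨fun hh => h.1 ⟨hh.1, by omega⟩, fun hh => h.2 ⟨hh.1, by omega⟩⟩)
          have hR := buildT_congr2 h₁ h₂ l (h₂ s) f (by
            intro p hp
            rcases htail p hp with h | h
            · exact Or.inl h
            · exact Or.inr ⟨fun hh => h.1 ⟨by omega, hh.2⟩, fun hh => h.2 ⟨by omega, hh.2⟩⟩)
          rw [hL, hR]
        · rw [buildT_cons, buildT_cons, if_neg hc, if_neg hc]
          exact buildT_congr2 h₁ h₂ l e f htail
      · simp only at hout
        rw [buildT_cons, buildT_cons, if_neg hout.1, if_neg hout.2]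
        exact buildT_congr2 h₁ h₂ l e f htail

lemma map_pair_id : ∀ (l : List (ℕ × ℕ)), l.map (fun p => (p.1, p.2)) = l
  | [] => rfl
  | p :: l => by simp [map_pair_id l]

lemma buildT_congr1 (h₁ : ℕ → ℕ) (l : List (ℕ × ℕ)) (e f : ℕ)
    (hcond : ∀ p ∈ l, h₁ p.2 = p.2 ∨
      (¬(e < h₁ p.2 ∧ h₁ p.2 < f) ∧ ¬(e < p.2 ∧ p.2 < f))) :
    buildT e f (l.map (fun p => (p.1, h₁ p.2))) = buildT e f l := by
  have := buildT_congr2 h₁ (fun x => x) l e f hcond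
  rw [this, map_pair_id]

lemma buildT_translate (d : ℕ) : ∀ (l : List (ℕ × ℕ)) (e f : ℕ),
    buildT (e + d) (f + d) (l.map (fun p => (p.1, p.2 + d))) = buildT e f l
  | [], e, f => by
      simp only [List.map_nil, buildT]
      congr 1
      omega
  | (i, s) :: l, e, f => by
      simp only [List.map_cons]
      by_cases hc : e < s ∧ s < f
      · rw [buildT_cons, buildT_cons, if_pos hc,
            if_pos (show e + d < s + d ∧ s + d < f + d by omega)]
        rw [buildT_translate d l e s, buildT_translate d l s f]
      · rw [buildT_cons, buildT_cons, if_neg hc,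
            if_neg (show ¬(e + d < s + d ∧ s + d < f + d) by omega)]
        exact buildT_translate d l e f

lemma buildT_labels : ∀ (l : List (ℕ × ℕ)) (e f x : ℕ),
    x ∈ (buildT e f l).labels → ∃ p ∈ l, p.1 = x
  | [], e, f, x, hx => by simp [buildT, LTree.labels] at hx
  | (i, s) :: l, e, f, x, hx => by
      rw [buildT_cons] at hx
      by_cases hc : e < s ∧ s < f
      · rw [if_pos hc] at hx
        simp only [LTree.labels, List.mem_cons, List.mem_append] at hx
        rcases hx with rfl | hx | hx
        · exact ⟨(x, s), by simp⟩
        · obtain ⟨p, hp, hpx⟩ := buildT_labels l e s x hx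
          exact ⟨p, by simp [hp], hpx⟩
        · obtain ⟨p, hp, hpx⟩ := buildT_labels l s f x hx
          exact ⟨p, by simp [hp], hpx⟩
      · rw [if_neg hc] at hx
        obtain ⟨p, hp, hpx⟩ := buildT_labels l e f x hx
        exact ⟨p, by simp [hp], hpx⟩

/-! ### Forest-length and leaves lemmas -/

lemma forestLen_cons (t : LTree) (X : List LTree) :
    forestLen (t :: X) = t.numNodes + forestLen X := by simp [forestLen]

lemma forestLen_append (X Y : List LTree) :
    forestLen (X ++ Y) = forestLen X + forestLen Y := by simp [forestLen]

lemma forestLen_leavesOf : ∀ (c : List ℕ), forestLen (leavesOf c) = 0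
  | [] => rfl
  | x :: c => by
      simp [leavesOf, forestLen_cons, LTree.numNodes] at *
      simpa [leavesOf] using forestLen_leavesOf c

lemma leavesOf_append (c d : List ℕ) : leavesOf (c ++ d) = leavesOf c ++ leavesOf d :=
  List.map_append

/-! ### `stepF` and grafting -/

lemma stepF_eq (y z : ℕ) : ∀ (P : List ℕ) (x : ℕ) (R R2 : List ℕ), x ≠ y →
    stepF (P ++ x :: R) (P ++ y :: z :: R2)
      = leavesOf P ++ LTree.node 1 (LTree.leaf y) (LTree.leaf z) :: leavesOf R2
  | [], x, R, R2, hxy => by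
      simp [stepF, hxy, leavesOf]
  | p :: P, x, R, R2, hxy => by
      show stepF (p :: (P ++ x :: R)) (p :: (P ++ y :: z :: R2)) = _
      rw [show stepF (p :: (P ++ x :: R)) (p :: (P ++ y :: z :: R2))
          = LTree.leaf p :: stepF (P ++ x :: R) (P ++ y :: z :: R2) by
        simp [stepF, List.append_eq]]
      rw [stepF_eq y z P x R R2 hxy]
      simp [leavesOf]

lemma graftForest_leaves_append : ∀ (c : List ℕ) (L : List LTree) (Y1 ts : List LTree),
    Y1.length = c.length →
    graftForest (leavesOf c ++ L) (Y1 ++ ts) = Y1 ++ graftForest L ts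
  | [], L, Y1, ts, h => by
      have : Y1 = [] := List.length_eq_zero_iff.1 (by simpa using h)
      subst this
      simp [leavesOf]
  | a :: c, L, Y1, ts, h => by
      cases Y1 with
      | nil => simp at h
      | cons u Y1 =>
          show graftForest (LTree.leaf a :: (leavesOf c ++ L)) (u :: (Y1 ++ ts)) = _
          show u :: graftForest (leavesOf c ++ L) (Y1 ++ ts) = _
          rw [graftForest_leaves_append c L Y1 ts (by simpa using h)]
          rfl

lemma graftForest_node (i y z : ℕ) (R2 : List ℕ) (U V : LTree) (Y2 : List LTree)
    (h : Y2.length = R2.length) :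
    graftForest (LTree.node i (LTree.leaf y) (LTree.leaf z) :: leavesOf R2) (U :: V :: Y2)
      = LTree.node i U V :: Y2 := by
  show LTree.node i U V :: graftForest (leavesOf R2) Y2 = _
  have := graftForest_leaves_append R2 [] Y2 [] h
  simp only [List.append_nil] at this
  rw [this]
  simp [graftForest]

lemma bullet_decomp (P R2 : List ℕ) (y z : ℕ) (Y1 Y2 : List LTree) (U V : LTree)
    (h1 : Y1.length = P.length) (h2 : Y2.length = R2.length) :
    bullet (leavesOf P ++ LTree.node 1 (LTree.leaf y) (LTree.leaf z) :: leavesOf R2)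
        (Y1 ++ U :: V :: Y2)
      = Y1.map (LTree.shift 1) ++
          LTree.node 1 (U.shift 1) (V.shift 1) :: Y2.map (LTree.shift 1) := by
  unfold bullet
  have hlen : forestLen (leavesOf P ++
      LTree.node 1 (LTree.leaf y) (LTree.leaf z) :: leavesOf R2) = 1 := by
    rw [forestLen_append, forestLen_leavesOf, forestLen_cons, forestLen_leavesOf]
    simp [LTree.numNodes]
  rw [hlen]
  simp only [List.map_append, List.map_cons]
  rw [graftForest_leaves_append P _ (Y1.map (LTree.shift 1)) _ (by simpa using h1)]
  rw [graftForest_node 1 y z R2 _ _ (Y2.map (LTree.shift 1)) (by simpa using h2)]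

/-! ### `splitAt1` -/

lemma splitAt1_leaves : ∀ c : List ℕ, splitAt1 (leavesOf c) = none
  | [] => rfl
  | x :: c => by
      show splitAt1 (LTree.leaf x :: leavesOf c) = none
      simp [splitAt1, splitAt1_leaves c]

lemma splitAt1_eq : ∀ (Y1 : List LTree) (U V : LTree) (Y2 : List LTree),
    (∀ T ∈ Y1, ∀ j t1 t2, T = LTree.node j t1 t2 → j ≠ 1) →
    splitAt1 (Y1 ++ LTree.node 1 U V :: Y2) = some (Y1.length, Y1 ++ U :: V :: Y2)
  | [], U, V, Y2, _ => by simp [splitAt1]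
  | T :: Y1, U, V, Y2, h => by
      cases T with
      | leaf x =>
          simp only [List.cons_append, splitAt1, List.append_eq]
          rw [splitAt1_eq Y1 U V Y2 (fun T hT => h T (by simp [hT]))]
          simp
      | node j t1 t2 =>
          have hj : j ≠ 1 := h _ (by simp) j t1 t2 rfl
          simp only [List.cons_append, splitAt1, if_neg hj, List.append_eq]
          rw [splitAt1_eq Y1 U V Y2 (fun T hT => h T (by simp [hT]))]
          simp

lemma dec_shift : ∀ t : LTree, (LTree.shift 1 t).dec = t
  | .leaf x => rfl
  | .node i t1 t2 => by
      simp [LTree.shift, LTree.dec, dec_shift t1, dec_shift t2]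

lemma swapAdj_eq {α : Type} : ∀ (L1 : List α) (m : ℕ) (x y : α) (L2 : List α),
    L1.length = m → swapAdj m (L1 ++ x :: y :: L2) = L1 ++ y :: x :: L2
  | [], 0, x, y, L2, _ => rfl
  | [], m+1, _, _, _, h => by simp at h
  | a :: L1, 0, _, _, _, h => by simp at h
  | a :: L1, m+1, x, y, L2, h => by
      simp only [List.cons_append, swapAdj, List.append_eq]
      rw [swapAdj_eq L1 m x y L2 (by simpa using h)]

/-! ### A length-one forest is determined by its squash and foliage -/

lemma numNodes_zero : ∀ t : LTree, t.numNodes = 0 → ∃ x, t = LTree.leaf x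
  | .leaf x, _ => ⟨x, rfl⟩
  | .node i t1 t2, h => by simp [LTree.numNodes] at h

lemma forest_all_leaves : ∀ (X : List LTree), forestLen X = 0 →
    X = leavesOf (squash X) ∧ forestLabels X = [] ∧ forestFoliage X = squash X
  | [], _ => ⟨rfl, rfl, rfl⟩
  | t :: X, h => by
      rw [forestLen_cons] at h
      have hn : t.numNodes = 0 := by omega
      have hX : forestLen X = 0 := by omega
      obtain ⟨x, rfl⟩ := numNodes_zero t hn
      obtain ⟨h1, h2, h3⟩ := forest_all_leaves X hX
      refine ⟨?_, ?_, ?_⟩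
      · show LTree.leaf x :: X = leavesOf (x :: squash X)
        rw [show leavesOf (x :: squash X) = LTree.leaf x :: leavesOf (squash X) from rfl,
            ← h1]
      · show LTree.labels (LTree.leaf x) ++ forestLabels X = []
        simp [LTree.labels, forestLabels] at h2 ⊢
        exact h2
      · show LTree.foliage (LTree.leaf x) ++ forestFoliage X = squash (LTree.leaf x :: X)
        show x :: forestFoliage X = x :: squash X
        rw [h3]

lemma squash_cons (t : LTree) (X : List LTree) : squash (t :: X) = t.value :: squash X := rfl

lemma foliage_cons (t : LTree) (X : List LTree) :
    forestFoliage (t :: X) = t.foliage ++ forestFoliage X := rfl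

lemma labels_cons (t : LTree) (X : List LTree) :
    forestLabels (t :: X) = t.labels ++ forestLabels X := rfl

lemma isl_step : ∀ (A : List LTree),
    (forestLabels A).Perm (List.range' 1 (forestLen A)) →
    (∀ x ∈ forestFoliage A, 0 < x) →
    forestLen A = 1 →
    A = stepF (squash A) (forestFoliage A)
  | [], _, _, hlen => by simp [forestLen] at hlen
  | t :: A, hlab, hpos, hlen => by
      rw [forestLen_cons] at hlen
      rcases Nat.eq_zero_or_pos t.numNodes with hz | hp
      · obtain ⟨x, rfl⟩ := numNodes_zero t hz
        have hA : A = stepF (squash A) (forestFoliage A) := by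
          refine isl_step A ?_ ?_ ?_
          · simpa [labels_cons, LTree.labels, forestLen_cons, LTree.numNodes, hz] using hlab
          · intro u hu
            exact hpos u (by simp [foliage_cons, LTree.foliage, hu])
          · omega
        show LTree.leaf x :: A = stepF (x :: squash A) (x :: forestFoliage A)
        rw [show stepF (x :: squash A) (x :: forestFoliage A)
            = LTree.leaf x :: stepF (squash A) (forestFoliage A) by simp [stepF], ← hA]
      · -- t has exactly one node
        have htn : t.numNodes = 1 := by omega
        have hA0 : forestLen A = 0 := by omega
        cases t with
        | leaf x => simp [LTree.numNodes] at htn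
        | node i t1 t2 =>
            have h12 : t1.numNodes = 0 ∧ t2.numNodes = 0 := by
              simp [LTree.numNodes] at htn
              omega
            obtain ⟨y, rfl⟩ := numNodes_zero t1 h12.1
            obtain ⟨z, rfl⟩ := numNodes_zero t2 h12.2
            obtain ⟨hA1, hA2, hA3⟩ := forest_all_leaves A hA0
            have hi : i = 1 := by
              have hmem : i ∈ forestLabels (LTree.node i (LTree.leaf y) (LTree.leaf z) :: A) := by
                simp [labels_cons, LTree.labels]
              have hmem2 := hlab.subset hmem
              have hflen : forestLen (LTree.node i (LTree.leaf y) (LTree.leaf z) :: A) = 1 := by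
                rw [forestLen_cons]; omega
              rw [hflen] at hmem2
              simpa [List.range'_one] using hmem2
            have hz2 : 0 < z := hpos z (by simp [foliage_cons, LTree.foliage])
            show LTree.node i (LTree.leaf y) (LTree.leaf z) :: A
              = stepF ((y + z) :: squash A) (y :: z :: forestFoliage A)
            have hne : y + z ≠ y := by omega
            rw [show stepF ((y + z) :: squash A) (y :: z :: forestFoliage A)
              = LTree.node 1 (LTree.leaf y) (LTree.leaf z) :: leavesOf (forestFoliage A) by
                simp [stepF, hne, hz2.ne']]
            rw [hi, hA3, ← hA1]

/-! ### From `AlleySpec` to `canonA` -/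

lemma sdiff_insert_eq (J T : Finset ℕ) (s : ℕ) : J \ insert s T = (J.erase s) \ T := by
  ext x
  simp only [Finset.mem_sdiff, Finset.mem_insert, Finset.mem_erase, not_or]
  tauto

lemma foldr_spec_eq (n : ℕ) : ∀ (r : List ℕ) (J : Finset ℕ) (F : List (List LTree)),
    F.length = r.length →
    (∀ A ∈ F, IsLForest A ∧ forestLen A = 1) →
    (∀ (i : ℕ) (h : i < F.length),
      squash (F.get ⟨i, h⟩) = phi n (J \ (r.take i).toFinset) ∧
      forestFoliage (F.get ⟨i, h⟩) = phi n (J \ (r.take (i + 1)).toFinset)) →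
    F.foldr bullet (leavesOf (phi n (J \ r.toFinset))) = canonA n J r
  | [], J, F, hlen, _, _ => by
      have : F = [] := List.length_eq_zero_iff.1 (by simpa using hlen)
      subst this
      simp [canonA]
  | s :: r, J, F, hlen, hfac, hidx => by
      cases F with
      | nil => simp at hlen
      | cons A F' =>
          have h0 := hidx 0 (by simp)
          simp only [List.get] at h0
          have hA : A = stepF (phi n J) (phi n (J.erase s)) := by
            have h1 := (hfac A (by simp)).1
            have h2 := (hfac A (by simp)).2
            have h3 := isl_step A h1.2.1 h1.2.2 h2
            rw [h3]
            have hsq : squash A = phi n J := by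
              have := h0.1
              simpa [Finset.sdiff_empty] using this
            have hfo : forestFoliage A = phi n (J.erase s) := by
              have := h0.2
              simp only [List.take_succ_cons, List.take_zero] at this
              rw [this]
              congr 1
              rw [show ([s] : List ℕ).toFinset = insert s (∅ : Finset ℕ) from rfl,
                  sdiff_insert_eq, Finset.sdiff_empty]
            rw [hsq, hfo]
          have hbase : J \ (s :: r).toFinset = (J.erase s) \ r.toFinset := by
            rw [List.toFinset_cons, sdiff_insert_eq]
          show bullet A (F'.foldr bullet (leavesOf (phi n (J \ (s :: r).toFinset))))
            = canonA n J (s :: r)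
          rw [canonA, hA, hbase]
          congr 1
          refine foldr_spec_eq n r (J.erase s) F' (by simpa using hlen)
            (fun B hB => hfac B (by simp [hB])) ?_
          intro i h
          have := hidx (i+1) (by simpa using Nat.succ_lt_succ h)
          simp only [List.get, List.take_succ_cons, List.toFinset_cons, sdiff_insert_eq] at this
          exact this

lemma spec_canonA {n : ℕ} {b : Alley} {X : List LTree} (h : AlleySpec n b X) :
    X = canonA n b.J b.s := by
  obtain ⟨_, _, F, hlen, hfac, hidx, rfl⟩ := h
  exact foldr_spec_eq n b.s b.J F hlen hfac hidx

end DeltaAux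
namespace DeltaAux

lemma idxL_snd_mem : ∀ (r : List ℕ) (k : ℕ) (p : ℕ × ℕ), p ∈ idxL k r → p.2 ∈ r
  | [], _, _, hp => absurd hp List.not_mem_nil
  | s :: r, k, p, hp => by
      simp only [idxL, List.mem_cons] at hp
      rcases hp with rfl | hp
      · simp
      · exact List.mem_cons_of_mem _ (idxL_snd_mem r (k+1) p hp)

lemma icc_sdiff_erase (n : ℕ) (A : Finset ℕ) (s : ℕ) (hs : s ∈ Finset.Icc 1 (n-1)) :
    (Finset.Icc 1 (n-1)) \ (A.erase s) = insert s ((Finset.Icc 1 (n-1)) \ A) := by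
  ext x
  simp only [Finset.mem_sdiff, Finset.mem_erase, Finset.mem_insert, not_and, not_or]
  by_cases hx : x = s
  · subst hx
    simp [hs]
  · simp only [hx, false_or, iff_false, not_false_iff, and_true, or_false]
    tauto

namespace Gap

variable {n : ℕ} {K : Finset ℕ} {t e f : ℕ}

lemma conj_int (h : Gap n K t e f) (s : ℕ) (hs : s ∈ K) (h1 : e < s) (h2 : s < f) :
    e < conjGen n K t s ∧ conjGen n K t s < f := by
  have hst : s ≠ t := fun h' => h.htK (h' ▸ hs)
  have het := h.het
  have htf := h.htf
  rw [conj_val h s hs]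
  split_ifs <;> omega

end Gap

lemma gap_of_sort (n : ℕ) (K : Finset ℕ) (t : ℕ) (l₁ l₂ : List ℕ)
    (hK : K ⊆ Finset.Icc 1 (n-1)) (htI : t ∈ Finset.Icc 1 (n-1)) (htK : t ∉ K)
    (h₁ : sc n K = l₁ ++ t :: l₂)
    (hl₁s : l₁.Pairwise (· < ·)) (hl₂s : l₂.Pairwise (· < ·))
    (hl₁ : ∀ x ∈ l₁, x < t) (hl₂ : ∀ x ∈ l₂, t < x) :
    Gap n K t (l₁.getLastD 0) (l₂.headD n) := by
  obtain ⟨ht1, ht2⟩ := Finset.mem_Icc.1 htI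
  have hmem1 : ∀ x ∈ l₁, x ∈ sc n K := by
    intro x hx
    rw [h₁]
    exact List.mem_append_left _ hx
  have hmem2 : ∀ x ∈ l₂, x ∈ sc n K := by
    intro x hx
    rw [h₁]
    exact List.mem_append_right _ (List.mem_cons_of_mem _ hx)
  refine ⟨hK, htI, htK, ?_, ?_, ?_, ?_, ?_, ?_⟩
  · -- e < t
    rcases getLastD_cases l₁ 0 with h | h
    · omega
    · exact hl₁ _ h
  · -- t < f
    rcases headD_cases l₂ n with h | h
    · omega
    · exact hl₂ _ h
  · -- f ≤ n
    rcases headD_cases l₂ n with h | h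
    · omega
    · have := (mem_sc.1 (hmem2 _ h)).1
      rw [Finset.mem_Icc] at this
      omega
  · -- interior
    intro w hw1 hw2 hwt
    have hwI : w ∈ Finset.Icc 1 (n-1) := by
      rw [Finset.mem_Icc]
      have hfn : l₂.headD n ≤ n := by
        rcases headD_cases l₂ n with h | h
        · omega
        · have := (mem_sc.1 (hmem2 _ h)).1
          rw [Finset.mem_Icc] at this
          omega
      omega
    by_contra hwK
    have hwsc : w ∈ sc n K := mem_sc.2 ⟨hwI, hwK⟩
    rw [h₁] at hwsc
    rcases List.mem_append.1 hwsc with h | h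
    · have := sorted_le_getLastD l₁ 0 w hl₁s h
      omega
    · rcases List.mem_cons.1 h with rfl | h
      · exact hwt rfl
      · have := sorted_headD_le l₂ n w hl₂s h
        omega
  · -- e = 0 ∨ e ∉ K
    rcases getLastD_cases l₁ 0 with h | h
    · exact Or.inl h
    · exact Or.inr (mem_sc.1 (hmem1 _ h)).2
  · -- f = n ∨ f ∉ K
    rcases headD_cases l₂ n with h | h
    · exact Or.inl h
    · exact Or.inr (mem_sc.1 (hmem2 _ h)).2

lemma canonE_labels (n : ℕ) (K : Finset ℕ) (r : List ℕ) :
    ∀ T ∈ canonE n K r, ∀ x ∈ T.labels, 1 ≤ x := by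
  intro T hT x hx
  unfold canonE at hT
  obtain ⟨ef, _, rfl⟩ := List.mem_map.1 hT
  obtain ⟨p, hp, rfl⟩ := buildT_labels _ _ _ x hx
  exact idxL_fst_ge r 1 p hp

/-! ### `canonA` equals `canonE` -/

theorem canonA_eq_canonE (n : ℕ) : ∀ (r : List ℕ) (K : Finset ℕ),
    K ⊆ Finset.Icc 1 (n-1) → r.Nodup → (∀ x ∈ r, x ∈ K) →
    canonA n K r = canonE n K r
  | [], K, _, _, _ => by
      show leavesOf (phi n K) = canonE n K []
      rw [phi_eq]
      unfold canonE leavesOf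
      rw [List.map_map]
      rfl
  | s :: r, K, hK, hnd, hrK => by
      have hsK := hrK s (by simp)
      have hsI := hK hsK
      obtain ⟨hs1, hs2⟩ := Finset.mem_Icc.1 hsI
      have hn2 : 2 ≤ n := by omega
      have hnotc : s ∉ (Finset.Icc 1 (n-1)) \ K := by simp [Finset.mem_sdiff, hsK]
      obtain ⟨l₁, l₂, hA1, hA2, hl₁s, hl₂s, hl₁, hl₂⟩ := sort_insert hnotc
      have hscK : sc n K = l₁ ++ l₂ := hA2
      have hsc' : sc n (K.erase s) = l₁ ++ s :: l₂ := by
        unfold sc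
        rw [icc_sdiff_erase n K s hsI]
        exact hA1
      obtain ⟨A, B, hp1, hp2, hlenA, hAle, hBge⟩ := pairs_split n s l₂ hl₂s l₁ 0 hl₁s
      set e := l₁.getLastD 0 with he
      set f := l₂.headD n with hf
      have het : e < s := by
        rcases getLastD_cases l₁ 0 with h | h
        · omega
        · exact hl₁ _ h
      have hsf : s < f := by
        rcases headD_cases l₂ n with h | h
        · omega
        · exact hl₂ _ h
      have hphiK : phi n K =
          A.map (fun p => p.2 - p.1) ++ (f - e) :: B.map (fun p => p.2 - p.1) := by
        rw [phi_eq, hscK, hp1]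
        simp
      have hphiE : phi n (K.erase s) =
          A.map (fun p => p.2 - p.1) ++ (s - e) :: (f - s) :: B.map (fun p => p.2 - p.1) := by
        rw [phi_eq, hsc', hp2]
        simp
      have hstep : stepF (phi n K) (phi n (K.erase s)) =
          leavesOf (A.map (fun p => p.2 - p.1)) ++
            LTree.node 1 (LTree.leaf (s - e)) (LTree.leaf (f - s)) ::
              leavesOf (B.map (fun p => p.2 - p.1)) := by
        rw [hphiK, hphiE]
        exact stepF_eq _ _ _ _ _ _ (by omega)
      have hsr : s ∉ r := (List.nodup_cons.1 hnd).1
      have hIH : canonA n (K.erase s) r = canonE n (K.erase s) r := by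
        refine canonA_eq_canonE n r (K.erase s)
          (fun x hx => hK (Finset.mem_of_mem_erase hx)) (List.nodup_cons.1 hnd).2 ?_
        intro x hx
        refine Finset.mem_erase.2 ⟨?_, hrK x (List.mem_cons_of_mem _ hx)⟩
        intro hxs
        exact hsr (hxs ▸ hx)
      have hcE : canonE n (K.erase s) r =
          A.map (fun ef => buildT ef.1 ef.2 (idxL 1 r)) ++
            buildT e s (idxL 1 r) :: buildT s f (idxL 1 r) ::
              B.map (fun ef => buildT ef.1 ef.2 (idxL 1 r)) := by
        unfold canonE
        rw [hsc', hp2]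
        simp
      show bullet (stepF (phi n K) (phi n (K.erase s))) (canonA n (K.erase s) r)
        = canonE n K (s :: r)
      rw [hIH, hstep, hcE,
        bullet_decomp _ _ _ _ _ _ _ _ (by simp) (by simp)]
      -- now compute canonE n K (s :: r)
      unfold canonE
      rw [hscK, hp1]
      simp only [List.map_append, List.map_cons, List.map_map]
      have hmid : buildT e f (idxL 1 (s :: r)) =
          LTree.node 1 ((buildT e s (idxL 1 r)).shift 1) ((buildT s f (idxL 1 r)).shift 1) := by
        show buildT e f ((1, s) :: idxL 2 r) = _
        rw [buildT_cons, if_pos ⟨het, hsf⟩]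
        rw [show (2 : ℕ) = 1 + 1 from rfl, idxL_succ r 1, buildT_shiftlab, buildT_shiftlab]
      rw [hmid]
      congr 1
      · refine List.map_congr_left ?_
        intro ef hef
        have hle : ef.2 ≤ e := hAle ef hef
        show (buildT ef.1 ef.2 (idxL 1 r)).shift 1 = buildT ef.1 ef.2 (idxL 1 (s :: r))
        rw [show idxL 1 (s :: r) = (1, s) :: idxL 2 r from rfl, buildT_cons,
            if_neg (by omega), show (2 : ℕ) = 1 + 1 from rfl, idxL_succ r 1, buildT_shiftlab]
      · congr 1
        refine List.map_congr_left ?_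
        intro ef hef
        have hge : f ≤ ef.1 := hBge ef hef
        show (buildT ef.1 ef.2 (idxL 1 r)).shift 1 = buildT ef.1 ef.2 (idxL 1 (s :: r))
        rw [show idxL 1 (s :: r) = (1, s) :: idxL 2 r from rfl, buildT_cons,
            if_neg (by omega), show (2 : ℕ) = 1 + 1 from rfl, idxL_succ r 1, buildT_shiftlab]

/-! ### The swap theorem -/

theorem swap_canonE (n : ℕ) (K : Finset ℕ) (t : ℕ) (r : List ℕ) (l₁ l₂ : List ℕ)
    (hK : K ⊆ Finset.Icc 1 (n-1)) (htI : t ∈ Finset.Icc 1 (n-1)) (htK : t ∉ K)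
    (hrK : ∀ x ∈ r, x ∈ K)
    (hscK : sc n K = l₁ ++ t :: l₂) (hscJ : sc n (insert t K) = l₁ ++ l₂)
    (hl₁s : l₁.Pairwise (· < ·)) (hl₂s : l₂.Pairwise (· < ·))
    (hl₁ : ∀ x ∈ l₁, x < t) (hl₂ : ∀ x ∈ l₂, t < x) :
    swapAdj l₁.length (canonE n K r) =
      canonE n ((insert t K).erase (l₁.getLastD 0 + (l₂.headD n - t)))
        (r.map (conjGen n K t)) := by
  set e := l₁.getLastD 0 with he
  set f := l₂.headD n with hf
  set q' := e + (f - t) with hq'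
  have hgap : Gap n K t e f := gap_of_sort n K t l₁ l₂ hK htI htK hscK hl₁s hl₂s hl₁ hl₂
  obtain ⟨ht1, ht2⟩ := Finset.mem_Icc.1 htI
  have het := hgap.het
  have htf := hgap.htf
  have hfn := hgap.hfn
  have hq'lt : e < q' ∧ q' < f := hgap.q'_lt
  have hq'I : q' ∈ Finset.Icc 1 (n-1) := by
    rw [Finset.mem_Icc]
    omega
  have hq'mem : q' ∈ insert t K := hgap.q'_mem
  have hq'notc : q' ∉ (Finset.Icc 1 (n-1)) \ (insert t K) := by
    simp [Finset.mem_sdiff, hq'mem]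
  obtain ⟨l₁', l₂', hB1, hB2, hl₁s', hl₂s', hl₁', hl₂'⟩ := sort_insert hq'notc
  have heq12 : l₁ = l₁' ∧ l₂ = l₂' := by
    refine split_uniq (fun x => x < q') l₁ l₁' l₂ l₂' (hscJ.symm.trans hB2) ?_ ?_ hl₁' ?_
    · intro x hx
      have := sorted_le_getLastD l₁ 0 x hl₁s hx
      omega
    · intro x hx
      have := sorted_headD_le l₂ n x hl₂s hx
      omega
    · intro x hx
      have := hl₂' x hx
      omega
  obtain ⟨h5, h6⟩ := heq12
  subst h5
  subst h6
  have hscK' : sc n ((insert t K).erase q') = l₁ ++ q' :: l₂ := by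
    unfold sc
    rw [icc_sdiff_erase n (insert t K) q' hq'I]
    exact hB1
  obtain ⟨A, B, hp1, hp2, hlenA, hAle, hBge⟩ := pairs_split n t l₂ hl₂s l₁ 0 hl₁s
  obtain ⟨A2, B2, hp1', hp2', hlenA2, _, _⟩ := pairs_split n q' l₂ hl₂s l₁ 0 hl₁s
  rw [← he, ← hf] at hp1 hp2 hp1' hp2'
  have hABeq := List.append_inj (hp1.symm.trans hp1') (hlenA.trans hlenA2.symm)
  obtain ⟨hAeq, hBeq⟩ := hABeq
  have hBeq2 : B = B2 := by
    injection hBeq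
  subst hAeq
  subst hBeq2
  have hpts : ∀ p ∈ idxL 1 r, p.2 ∈ K := fun p hp => hrK p.2 (idxL_snd_mem r 1 p hp)
  have hCK : canonE n K r =
      A.map (fun ef => buildT ef.1 ef.2 (idxL 1 r)) ++
        buildT e t (idxL 1 r) :: buildT t f (idxL 1 r) :: B.map (fun ef => buildT ef.1 ef.2 (idxL 1 r)) := by
    unfold canonE
    rw [hscK, hp2]
    simp only [List.map_append, List.map_cons]
  have hmap : idxL 1 (r.map (conjGen n K t)) = (idxL 1 r).map (fun p => (p.1, conjGen n K t p.2)) := idxL_map (conjGen n K t) r 1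
  have hCK' : canonE n ((insert t K).erase q') (r.map (conjGen n K t)) =
      A.map (fun ef => buildT ef.1 ef.2 ((idxL 1 r).map (fun p => (p.1, conjGen n K t p.2)))) ++
        buildT e q' ((idxL 1 r).map (fun p => (p.1, conjGen n K t p.2))) ::
          buildT q' f ((idxL 1 r).map (fun p => (p.1, conjGen n K t p.2))) ::
            B.map (fun ef => buildT ef.1 ef.2 ((idxL 1 r).map (fun p => (p.1, conjGen n K t p.2)))) := by
    unfold canonE
    rw [hscK', hp2', hmap]
    simp only [List.map_append, List.map_cons]
  rw [hCK, swapAdj_eq _ _ _ _ _ (by simp [hlenA]), hCK']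
  -- now prove the four component identities
  have houter : ∀ s ∈ K, ¬(e < s ∧ s < f) → conjGen n K t s = s := by
    intro s hs hout
    rw [hgap.conj_val s hs]
    have hst : s ≠ t := fun h' => htK (h' ▸ hs)
    split_ifs <;> omega
  congr 1
  · -- A parts
    refine List.map_congr_left ?_
    intro ef hef
    have hle : ef.2 ≤ e := hAle ef hef
    refine (buildT_congr1 (conjGen n K t) (idxL 1 r) ef.1 ef.2 ?_).symm
    intro p hp
    have hpK := hpts p hp
    by_cases hin : e < p.2 ∧ p.2 < f
    · have := hgap.conj_int p.2 hpK hin.1 hin.2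
      exact Or.inr ⟨by omega, by omega⟩
    · exact Or.inl (houter p.2 hpK hin)
  · congr 1
    · -- first middle part : buildT e q' (map g) = buildT t f (idxL 1 r)
      have htr := buildT_translate (t - e)
        ((idxL 1 r).map (fun p => (p.1, conjGen n K t p.2))) e q'
      have he1 : e + (t - e) = t := by omega
      have he2 : q' + (t - e) = f := by omega
      rw [he1, he2] at htr
      rw [← htr, List.map_map]
      have hcomp : ((fun p : ℕ × ℕ => (p.1, p.2 + (t - e))) ∘
          fun p : ℕ × ℕ => (p.1, conjGen n K t p.2))
          = fun p : ℕ × ℕ => (p.1, (fun s => conjGen n K t s + (t - e)) p.2) := rfl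
      rw [hcomp]
      refine (buildT_congr1 (fun s => conjGen n K t s + (t - e)) (idxL 1 r) t f ?_).symm
      intro p hp
      have hpK := hpts p hp
      have hst : p.2 ≠ t := fun h' => htK (h' ▸ hpK)
      have hv := hgap.conj_val p.2 hpK
      simp only [hv]
      split_ifs with c1 c2 c3
      · exact Or.inr ⟨by omega, by omega⟩
      · exact Or.inr ⟨by omega, by omega⟩
      · exact Or.inl (by omega)
      · exact Or.inr ⟨by omega, by omega⟩
    · congr 1
      · -- second middle part : buildT q' f (map g) = buildT e t (idxL 1 r)
        have hstep1 : buildT q' f ((idxL 1 r).map (fun p => (p.1, conjGen n K t p.2)))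
            = buildT q' f ((idxL 1 r).map (fun p => (p.1, p.2 + (f - t)))) := by
          refine buildT_congr2 (conjGen n K t) (fun s => s + (f - t)) (idxL 1 r) q' f ?_
          intro p hp
          have hpK := hpts p hp
          have hst : p.2 ≠ t := fun h' => htK (h' ▸ hpK)
          have hv := hgap.conj_val p.2 hpK
          simp only [hv]
          split_ifs with c1 c2 c3
          · exact Or.inr ⟨by omega, by omega⟩
          · exact Or.inl rfl
          · exact Or.inr ⟨by omega, by omega⟩
          · exact Or.inr ⟨by omega, by omega⟩
        rw [hstep1]
        have htr := buildT_translate (f - t) (idxL 1 r) e t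
        have he1 : e + (f - t) = q' := rfl
        have he2 : t + (f - t) = f := by omega
        rw [he1, he2] at htr
        exact htr.symm
      · -- B parts
        refine List.map_congr_left ?_
        intro ef hef
        have hge : f ≤ ef.1 := hBge ef hef
        refine (buildT_congr1 (conjGen n K t) (idxL 1 r) ef.1 ef.2 ?_).symm
        intro p hp
        have hpK := hpts p hp
        by_cases hin : e < p.2 ∧ p.2 < f
        · have := hgap.conj_int p.2 hpK hin.1 hin.2
          exact Or.inr ⟨by omega, by omega⟩
        · exact Or.inl (houter p.2 hpK hin)

end DeltaAux
namespace DeltaAux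

open LTree

/-- Main computation for the nonempty case. -/
theorem main_cons (k : Type) [Field k] (n : ℕ) (J : Finset ℕ) (s1 : ℕ) (rest : List ℕ)
    (hJI : J ⊆ Finset.Icc 1 (n-1)) (hnd : (s1 :: rest).Nodup)
    (hsJ : ∀ x ∈ s1 :: rest, x ∈ J)
    (φF : Alley → List LTree) (hφ : ∀ b, IsAlley n b → AlleySpec n b (φF b)) :
    deltaF k (φF ⟨J, s1 :: rest⟩) =
      Finsupp.single (φF ⟨J.erase s1, rest⟩) 1 -
      Finsupp.single (φF (actAlley n s1 ⟨J.erase s1, rest⟩)) 1 := by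
  have hs1J : s1 ∈ J := hsJ s1 (by simp)
  have htI : s1 ∈ Finset.Icc 1 (n-1) := hJI hs1J
  have hs1K : s1 ∉ J.erase s1 := Finset.notMem_erase s1 J
  have hKI : J.erase s1 ⊆ Finset.Icc 1 (n-1) :=
    fun x hx => hJI (Finset.mem_of_mem_erase hx)
  have hrnd : rest.Nodup := (List.nodup_cons.1 hnd).2
  have hs1r : s1 ∉ rest := (List.nodup_cons.1 hnd).1
  have hrK : ∀ x ∈ rest, x ∈ J.erase s1 := by
    intro x hx
    refine Finset.mem_erase.2 ⟨fun hxs => hs1r (hxs ▸ hx), hsJ x (List.mem_cons_of_mem _ hx)⟩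
  have hins : insert s1 (J.erase s1) = J := Finset.insert_erase hs1J
  have hnotc : s1 ∉ (Finset.Icc 1 (n-1)) \ J := by simp [Finset.mem_sdiff, hs1J]
  obtain ⟨l₁, l₂, hA1, hA2, hl₁s, hl₂s, hl₁, hl₂⟩ := sort_insert hnotc
  have hscK : sc n (J.erase s1) = l₁ ++ s1 :: l₂ := by
    unfold sc
    rw [icc_sdiff_erase n J s1 htI]
    exact hA1
  have hscJ : sc n J = l₁ ++ l₂ := hA2
  have hgap : Gap n (J.erase s1) s1 (l₁.getLastD 0) (l₂.headD n) :=
    gap_of_sort n (J.erase s1) s1 l₁ l₂ hKI htI hs1K hscK hl₁s hl₂s hl₁ hl₂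
  set e := l₁.getLastD 0 with he
  set f := l₂.headD n with hf
  have het := hgap.het
  have htf := hgap.htf
  obtain ⟨A, B, hp1, hp2, hlenA, hAle, hBge⟩ := pairs_split n s1 l₂ hl₂s l₁ 0 hl₁s
  rw [← he, ← hf] at hp1 hp2
  -- decompositions of phi
  have hphiJ : phi n J =
      A.map (fun p => p.2 - p.1) ++ (f - e) :: B.map (fun p => p.2 - p.1) := by
    rw [phi_eq, hscJ, hp1]
    simp
  have hphiK : phi n (J.erase s1) =
      A.map (fun p => p.2 - p.1) ++ (s1 - e) :: (f - s1) :: B.map (fun p => p.2 - p.1) := by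
    rw [phi_eq, hscK, hp2]
    simp
  have hstep : stepF (phi n J) (phi n (J.erase s1)) =
      leavesOf (A.map (fun p => p.2 - p.1)) ++
        LTree.node 1 (LTree.leaf (s1 - e)) (LTree.leaf (f - s1)) ::
          leavesOf (B.map (fun p => p.2 - p.1)) := by
    rw [hphiJ, hphiK]
    exact stepF_eq _ _ _ _ _ _ (by omega)
  have hCE : canonE n (J.erase s1) rest =
      A.map (fun ef => buildT ef.1 ef.2 (idxL 1 rest)) ++
        buildT e s1 (idxL 1 rest) :: buildT s1 f (idxL 1 rest) ::
          B.map (fun ef => buildT ef.1 ef.2 (idxL 1 rest)) := by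
    unfold canonE
    rw [hscK, hp2]
    simp only [List.map_append, List.map_cons]
  have hYE : canonA n (J.erase s1) rest = canonE n (J.erase s1) rest :=
    canonA_eq_canonE n rest (J.erase s1) hKI hrnd hrK
  -- compute the bullet product
  have hXc : canonA n J (s1 :: rest) =
      bullet (stepF (phi n J) (phi n (J.erase s1))) (canonA n (J.erase s1) rest) := rfl
  have hbul : canonA n J (s1 :: rest) =
      (A.map (fun ef => buildT ef.1 ef.2 (idxL 1 rest))).map (LTree.shift 1) ++
        LTree.node 1 ((buildT e s1 (idxL 1 rest)).shift 1)
          ((buildT s1 f (idxL 1 rest)).shift 1) ::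
            (B.map (fun ef => buildT ef.1 ef.2 (idxL 1 rest))).map (LTree.shift 1) := by
    rw [hXc, hYE, hstep, hCE]
    exact bullet_decomp _ _ _ _ _ _ _ _ (by simp) (by simp)
  -- splitAt1
  have hnode1 : ∀ T ∈ (A.map (fun ef => buildT ef.1 ef.2 (idxL 1 rest))).map (LTree.shift 1),
      ∀ j t1 t2, T = LTree.node j t1 t2 → j ≠ 1 := by
    intro T hT j t1 t2 hTeq hj1
    obtain ⟨T0, hT0, rfl⟩ := List.mem_map.1 hT
    obtain ⟨ef, hef, rfl⟩ := List.mem_map.1 hT0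
    cases hbt : buildT ef.1 ef.2 (idxL 1 rest) with
    | leaf x => rw [hbt] at hTeq; simp [LTree.shift] at hTeq
    | node j0 a b =>
        rw [hbt] at hTeq
        simp only [LTree.shift, LTree.node.injEq] at hTeq
        have hj0 : j0 = 0 := by omega
        have hmem : j0 ∈ (buildT ef.1 ef.2 (idxL 1 rest)).labels := by
          rw [hbt]
          simp [LTree.labels]
        obtain ⟨p, hp, hp1'⟩ := buildT_labels _ _ _ j0 hmem
        have := idxL_fst_ge rest 1 p hp
        omega
  have hsplit : splitAt1 (canonA n J (s1 :: rest)) =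
      some (A.length, (canonE n (J.erase s1) rest).map (LTree.shift 1)) := by
    rw [hbul, splitAt1_eq _ _ _ _ hnode1, hCE]
    simp [List.map_append]
  have hdec : ((canonE n (J.erase s1) rest).map (LTree.shift 1)).map LTree.dec
      = canonE n (J.erase s1) rest := by
    rw [List.map_map]
    have : ∀ T ∈ canonE n (J.erase s1) rest, (LTree.dec ∘ LTree.shift 1) T = id T :=
      fun T _ => dec_shift T
    rw [List.map_congr_left this, List.map_id]
  have hdelta : deltaF k (canonA n J (s1 :: rest)) =
      Finsupp.single (canonE n (J.erase s1) rest) 1 -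
        Finsupp.single (swapAdj A.length (canonE n (J.erase s1) rest)) 1 := by
    unfold deltaF
    rw [hsplit]
    show Finsupp.single (((canonE n (J.erase s1) rest).map (LTree.shift 1)).map LTree.dec) 1 -
        Finsupp.single (swapAdj A.length
          (((canonE n (J.erase s1) rest).map (LTree.shift 1)).map LTree.dec)) 1 = _
    rw [hdec]
  -- now the swapped term
  have hscJ' : sc n (insert s1 (J.erase s1)) = l₁ ++ l₂ := by rw [hins]; exact hscJ
  have hswap := swap_canonE n (J.erase s1) s1 rest l₁ l₂ hKI htI hs1K hrK hscK hscJ'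
    hl₁s hl₂s hl₁ hl₂
  have himg : (J.erase s1).image (conjGen n (J.erase s1) s1)
      = (insert s1 (J.erase s1)).erase (e + (f - s1)) := hgap.image_conj
  have hZE : canonA n ((J.erase s1).image (conjGen n (J.erase s1) s1))
        (rest.map (conjGen n (J.erase s1) s1))
      = canonE n ((J.erase s1).image (conjGen n (J.erase s1) s1))
        (rest.map (conjGen n (J.erase s1) s1)) := by
    refine canonA_eq_canonE n _ _ ?_ ?_ ?_
    · rw [himg]
      intro x hx
      have := Finset.mem_of_mem_erase hx
      rw [hins] at this
      exact hJI this
    · refine List.Nodup.map_on ?_ hrnd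
      intro x hx y hy hxy
      exact hgap.conj_injOn (hrK x hx) (hrK y hy) hxy
    · intro x hx
      obtain ⟨y, hy, rfl⟩ := List.mem_map.1 hx
      exact Finset.mem_image_of_mem _ (hrK y hy)
  -- the three values of φF
  have hXf : φF ⟨J, s1 :: rest⟩ = canonA n J (s1 :: rest) :=
    spec_canonA (hφ _ ⟨hJI, hnd, hsJ⟩)
  have hKalley : IsAlley n ⟨J.erase s1, rest⟩ := ⟨hKI, hrnd, hrK⟩
  have hYf : φF ⟨J.erase s1, rest⟩ = canonA n (J.erase s1) rest :=
    spec_canonA (hφ _ hKalley)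
  have hactA : IsAlley n (actAlley n s1 ⟨J.erase s1, rest⟩) := by
    refine ⟨?_, ?_, ?_⟩
    · show (J.erase s1).image (conjGen n (J.erase s1) s1) ⊆ Finset.Icc 1 (n-1)
      rw [himg]
      intro x hx
      have hx2 := Finset.mem_of_mem_erase hx
      rw [hins] at hx2
      exact hJI hx2
    · show (rest.map (conjGen n (J.erase s1) s1)).Nodup
      refine List.Nodup.map_on ?_ hrnd
      intro x hx y hy hxy
      exact hgap.conj_injOn (hrK x hx) (hrK y hy) hxy
    · show ∀ x ∈ rest.map (conjGen n (J.erase s1) s1),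
        x ∈ (J.erase s1).image (conjGen n (J.erase s1) s1)
      intro x hx
      obtain ⟨y, hy, rfl⟩ := List.mem_map.1 hx
      exact Finset.mem_image_of_mem _ (hrK y hy)
  have hZf : φF (actAlley n s1 ⟨J.erase s1, rest⟩)
      = canonA n ((J.erase s1).image (conjGen n (J.erase s1) s1))
          (rest.map (conjGen n (J.erase s1) s1)) :=
    spec_canonA (hφ _ hactA)
  rw [hXf, hYf, hZf, hdelta, hYE, hZE, himg, hlenA, he, hf, hswap]

end DeltaAux
/-- **The difference operators coincide (Proposition `DeltaCoincides`).** For every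
alley `a` one has `φ(δ(a)) = δ(φ(a))`. -/
theorem delta_coincides (k : Type) [Field k] [CharZero k] (n : ℕ) (hn : 1 ≤ n)
    (a : Alley) (ha : IsAlley n a)
    (φF : Alley → List LTree) (hφ : ∀ b, IsAlley n b → AlleySpec n b (φF b)) :
    deltaF k (φF a) =
      (match a.s with
      | [] => Finsupp.single (φF a) 1
      | s1 :: rest =>
          Finsupp.single (φF ⟨a.J.erase s1, rest⟩) 1 -
          Finsupp.single (φF (actAlley n s1 ⟨a.J.erase s1, rest⟩)) 1) := by
  obtain ⟨J, s⟩ := a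
  obtain ⟨hJI, hnd, hsJ⟩ := ha
  cases s with
  | nil =>
      show deltaF k (φF ⟨J, []⟩) = Finsupp.single (φF ⟨J, []⟩) 1
      have hX : φF ⟨J, []⟩ = DeltaAux.canonA n J [] := DeltaAux.spec_canonA (hφ ⟨J, []⟩ ⟨hJI, hnd, hsJ⟩)
      have hceq : DeltaAux.canonA n J [] = leavesOf (phi n J) := rfl
      rw [hX, hceq]
      unfold deltaF
      rw [DeltaAux.splitAt1_leaves]
  | cons s1 rest =>
      show deltaF k (φF ⟨J, s1 :: rest⟩) =
        Finsupp.single (φF ⟨J.erase s1, rest⟩) 1 -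
        Finsupp.single (φF (actAlley n s1 ⟨J.erase s1, rest⟩)) 1
      exact DeltaAux.main_cons k n J s1 rest hJI hnd hsJ φF hφ
end

section
/- The map ι is a homomorphism of kℬ*-modules: ι(P.B) = ι(P).B for every path P of Q and every B ∈ ℬ*. -/
set_option maxHeartbeats 1000000

section IotaAux
open List

theorem list_set_self {α : Type} (l : List α) (n : ℕ) (h : n < l.length) :
    l.set n l[n] = l := by
  apply List.ext_getElem (by simp)
  intro i h1 h2
  rw [List.getElem_set]
  split
  · next heq => subst heq; rfl
  · rfl

theorem perm_set {α : Type} (l : List α) (n : ℕ) (h : n < l.length) (x : α) :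
    (l.set n x).Perm (x :: l.eraseIdx n) := by
  rw [List.set_eq_take_cons_drop _ h, List.eraseIdx_eq_take_drop_succ]
  exact List.perm_middle

theorem perm_eraseIdx {α : Type} (l : List α) (n : ℕ) (h : n < l.length) :
    l.Perm (l[n] :: l.eraseIdx n) := by
  conv_lhs => rw [← list_set_self l n h]
  exact perm_set l n h _

theorem graft_append (t : LTree) : ∀ (u v : List LTree), t.foliage.length = u.length →
    t.graft (u ++ v) = ((t.graft u).1, v) := by
  induction t with
  | leaf x =>
    intro u v h
    match u, h with
    | [y], _ => simp [LTree.graft]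
  | node i t1 t2 ih1 ih2 =>
    intro u v h
    have hl : t1.foliage.length + t2.foliage.length = u.length := by
      simpa [LTree.foliage] using h
    have ht1 : t1.foliage.length = (u.take t1.foliage.length).length := by
      simp [List.length_take]; omega
    have ht2 : t2.foliage.length = (u.drop t1.foliage.length).length := by
      simp [List.length_drop]; omega
    have p1L : t1.graft (u ++ v) = ((t1.graft (u.take t1.foliage.length)).1,
        u.drop t1.foliage.length ++ v) := by
      conv_lhs => rw [show u ++ v = u.take t1.foliage.length ++ (u.drop t1.foliage.length ++ v) by
        rw [← List.append_assoc, List.take_append_drop]]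
      exact ih1 _ _ ht1
    have p1R : t1.graft u = ((t1.graft (u.take t1.foliage.length)).1,
        u.drop t1.foliage.length) := by
      conv_lhs => rw [← List.take_append_drop t1.foliage.length u]
      exact ih1 _ _ ht1
    have p2L : t2.graft (u.drop t1.foliage.length ++ v)
        = ((t2.graft (u.drop t1.foliage.length)).1, v) := ih2 _ _ ht2
    simp only [LTree.graft, p1L, p1R, p2L]

theorem graft_fst_take (t : LTree) (u : List LTree) (h : t.foliage.length ≤ u.length) :
    (t.graft u).1 = (t.graft (u.take t.foliage.length)).1 := by
  conv_lhs => rw [← List.take_append_drop t.foliage.length u]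
  rw [graft_append t _ _ (by simp [List.length_take]; omega)]

theorem graft_snd_drop (t : LTree) (u : List LTree) (h : t.foliage.length ≤ u.length) :
    (t.graft u).2 = u.drop t.foliage.length := by
  conv_lhs => rw [← List.take_append_drop t.foliage.length u]
  rw [graft_append t _ _ (by simp [List.length_take]; omega)]

theorem graft_leaves (t : LTree) : ∀ v : List LTree,
    t.graft (leavesOf t.foliage ++ v) = (t, v) := by
  induction t with
  | leaf x => intro v; simp [LTree.graft, LTree.foliage, leavesOf]
  | node i t1 t2 ih1 ih2 =>
    intro v
    have e : leavesOf (LTree.node i t1 t2).foliage ++ v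
        = leavesOf t1.foliage ++ (leavesOf t2.foliage ++ v) := by
      simp [LTree.foliage, leavesOf]
    rw [e]
    simp only [LTree.graft, ih1, ih2]

theorem numNodes_graft (t : LTree) : ∀ (u : List LTree), t.foliage.length = u.length →
    ((t.graft u).1).numNodes = t.numNodes + (u.map LTree.numNodes).sum := by
  induction t with
  | leaf x =>
    intro u h
    match u, h with
    | [y], _ => simp [LTree.graft, LTree.numNodes]
  | node i t1 t2 ih1 ih2 =>
    intro u h
    have hl : t1.foliage.length + t2.foliage.length = u.length := by
      simpa [LTree.foliage] using h
    have ht1 : t1.foliage.length = (u.take t1.foliage.length).length := by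
      simp [List.length_take]; omega
    have ht2 : t2.foliage.length = (u.drop t1.foliage.length).length := by
      simp [List.length_drop]; omega
    have p1R : t1.graft u = ((t1.graft (u.take t1.foliage.length)).1,
        u.drop t1.foliage.length) := by
      conv_lhs => rw [← List.take_append_drop t1.foliage.length u]
      exact graft_append t1 _ _ ht1
    simp only [LTree.graft, p1R, LTree.numNodes]
    rw [ih1 _ ht1, ih2 _ ht2, List.map_take, List.map_drop]
    have := List.sum_take_add_sum_drop (u.map LTree.numNodes) t1.foliage.length
    omega

theorem value_branchActTree (a b m : ℕ) : ∀ (t u : LTree),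
    u ∈ branchActTree a b m t → u.value = t.value := by
  intro t
  induction t with
  | leaf x =>
    intro u hu
    by_cases hx : x = a + b
    · simp [branchActTree, hx] at hu
      subst hu; simp [LTree.value, hx]
    · simp [branchActTree, hx] at hu
  | node i t1 t2 ih1 ih2 =>
    intro u hu
    simp only [branchActTree, List.mem_append, List.mem_map] at hu
    rcases hu with ⟨w, hw, rfl⟩ | ⟨w, hw, rfl⟩
    · simp [LTree.value, ih1 w hw]
    · simp [LTree.value, ih2 w hw]

theorem squash_branchWays (a b m : ℕ) : ∀ (Y Y' : List LTree),
    Y' ∈ branchWays a b m Y → squash Y' = squash Y := by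
  intro Y
  induction Y with
  | nil => intro Y' h; simp [branchWays] at h
  | cons t r ih =>
    intro Y' h
    simp only [branchWays, List.mem_append, List.mem_map] at h
    rcases h with ⟨u, hu, rfl⟩ | ⟨w, hw, rfl⟩
    · simp [squash, value_branchActTree a b m t u hu]
    · have := ih w hw
      simp only [squash, List.map_cons] at this ⊢
      rw [this]

theorem length_branchWays (a b m : ℕ) (Y Y' : List LTree)
    (h : Y' ∈ branchWays a b m Y) : Y'.length = Y.length := by
  have := congrArg List.length (squash_branchWays a b m Y Y' h)
  simpa [squash] using this

theorem branchWays_append (a b m : ℕ) : ∀ (u v : List LTree),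
    branchWays a b m (u ++ v) = (branchWays a b m u).map (· ++ v)
      ++ (branchWays a b m v).map (u ++ ·) := by
  intro u
  induction u with
  | nil => intro v; simp [branchWays]
  | cons t r ih =>
    intro v
    simp only [List.cons_append, branchWays, List.append_eq, ih, List.map_append,
      List.map_map, List.append_assoc]
    simp [Function.comp_def]

theorem branchActTree_graft (a b m : ℕ) : ∀ (t : LTree) (zs : List LTree),
    t.foliage.length = zs.length →
    branchActTree a b m (t.graft zs).1
      = (branchWays a b m zs).map (fun w => (t.graft w).1) := by
  intro t
  induction t with
  | leaf x =>
    intro zs h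
    match zs, h with
    | [z], _ =>
      show branchActTree a b m z = _
      have : branchWays a b m [z] = (branchActTree a b m z).map (fun u => [u]) := by
        simp [branchWays]
      rw [this, List.map_map]
      have h2 : ((fun w => ((LTree.leaf x).graft w).1) ∘ fun u => [u])
          = fun u : LTree => u := by
        funext u; rfl
      rw [h2, List.map_id']
  | node i t1 t2 ih1 ih2 =>
    intro zs h
    have hl : t1.foliage.length + t2.foliage.length = zs.length := by
      simpa [LTree.foliage] using h
    have ht1 : t1.foliage.length = (zs.take t1.foliage.length).length := by
      simp [List.length_take]; omega
    have ht2 : t2.foliage.length = (zs.drop t1.foliage.length).length := by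
      simp [List.length_drop]; omega
    have p1R : t1.graft zs = ((t1.graft (zs.take t1.foliage.length)).1,
        zs.drop t1.foliage.length) := by
      conv_lhs => rw [← List.take_append_drop t1.foliage.length zs]
      exact graft_append t1 _ _ ht1
    conv_rhs => rw [← List.take_append_drop t1.foliage.length zs]
    rw [branchWays_append, List.map_append, List.map_map, List.map_map]
    simp only [LTree.graft, p1R, branchActTree]
    rw [ih1 _ ht1, ih2 _ ht2, List.map_map, List.map_map]
    congr 1
    · apply List.map_congr_left
      intro w hw
      have hwlen : t1.foliage.length = w.length := by
        rw [length_branchWays a b m _ w hw]; exact ht1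
      simp only [Function.comp_apply]
      rw [graft_append t1 w _ hwlen]
    · apply List.map_congr_left
      intro w hw
      simp only [Function.comp_apply]
      rw [graft_append t1 _ _ ht1]

theorem branchWays_graftForest (a b m : ℕ) : ∀ (X Z : List LTree),
    (forestFoliage X).length = Z.length →
    branchWays a b m (graftForest X Z) = (branchWays a b m Z).map (graftForest X) := by
  intro X
  induction X with
  | nil =>
    intro Z h
    have : Z = [] := by
      simpa using (List.length_eq_zero_iff.mp (by simpa [forestFoliage] using h.symm))
    subst this
    simp [graftForest, branchWays]
  | cons t ts ih =>
    intro Z h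
    have hl : t.foliage.length + (forestFoliage ts).length = Z.length := by
      simpa [forestFoliage] using h
    have ht1 : t.foliage.length = (Z.take t.foliage.length).length := by
      simp [List.length_take]; omega
    have ht2 : (forestFoliage ts).length = (Z.drop t.foliage.length).length := by
      simp [List.length_drop]; omega
    have p1R : t.graft Z = ((t.graft (Z.take t.foliage.length)).1,
        Z.drop t.foliage.length) := by
      conv_lhs => rw [← List.take_append_drop t.foliage.length Z]
      exact graft_append t _ _ ht1
    conv_rhs => rw [← List.take_append_drop t.foliage.length Z]
    rw [branchWays_append, List.map_append, List.map_map, List.map_map]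
    show branchWays a b m ((t.graft Z).1 :: graftForest ts (t.graft Z).2) = _
    rw [p1R]
    show (branchActTree a b m (t.graft (Z.take t.foliage.length)).1).map _
        ++ (branchWays a b m (graftForest ts (Z.drop t.foliage.length))).map _ = _
    rw [branchActTree_graft a b m t _ ht1, ih _ ht2, List.map_map, List.map_map]
    congr 1
    · apply List.map_congr_left
      intro w hw
      have hwlen : t.foliage.length = w.length := by
        rw [length_branchWays a b m _ w hw]; exact ht1
      show (t.graft w).1 :: graftForest ts (Z.drop t.foliage.length)
          = graftForest (t :: ts) (w ++ Z.drop t.foliage.length)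
      show _ = (t.graft (w ++ _)).1 :: graftForest ts (t.graft (w ++ _)).2
      rw [graft_append t w _ hwlen]
    · apply List.map_congr_left
      intro w hw
      show (t.graft (Z.take t.foliage.length)).1 :: graftForest ts w
          = graftForest (t :: ts) (Z.take t.foliage.length ++ w)
      show _ = (t.graft (_ ++ w)).1 :: graftForest ts (t.graft (_ ++ w)).2
      rw [graft_append t _ w ht1]

theorem numNodes_shift (c : ℕ) : ∀ t : LTree, (t.shift c).numNodes = t.numNodes := by
  intro t
  induction t with
  | leaf x => rfl
  | node i t1 t2 ih1 ih2 => simp [LTree.shift, LTree.numNodes, ih1, ih2]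

theorem forestLen_map_shift (c : ℕ) (Y : List LTree) :
    forestLen (Y.map (LTree.shift c)) = forestLen Y := by
  simp [forestLen, List.map_map, Function.comp_def, numNodes_shift]

theorem branchActTree_shift (a b m c : ℕ) : ∀ t : LTree,
    branchActTree a b (m + c) (t.shift c) = (branchActTree a b m t).map (LTree.shift c) := by
  intro t
  induction t with
  | leaf x =>
    by_cases hx : x = a + b <;> simp [LTree.shift, branchActTree, hx]
  | node i t1 t2 ih1 ih2 =>
    simp [LTree.shift, branchActTree, ih1, ih2, List.map_map, Function.comp_def]

theorem branchWays_shift (a b m c : ℕ) : ∀ Y : List LTree,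
    branchWays a b (m + c) (Y.map (LTree.shift c))
      = (branchWays a b m Y).map (List.map (LTree.shift c)) := by
  intro Y
  induction Y with
  | nil => simp [branchWays]
  | cons t r ih =>
    simp [branchWays, branchActTree_shift, ih, List.map_map, Function.comp_def,
      LTree.shift]

theorem forestLen_leavesOf (w : List ℕ) : forestLen (leavesOf w) = 0 := by
  simp only [forestLen, leavesOf, List.map_map]
  apply List.sum_eq_zero
  intro x hx
  simp only [List.mem_map, Function.comp_apply] at hx
  obtain ⟨y, _, rfl⟩ := hx
  rfl

theorem forestFoliage_leavesOf (w : List ℕ) : forestFoliage (leavesOf w) = w := by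
  induction w with
  | nil => rfl
  | cons x r ih =>
    show LTree.foliage (LTree.leaf x) ++ forestFoliage (leavesOf r) = x :: r
    rw [ih]; rfl

theorem squash_leavesOf (w : List ℕ) : squash (leavesOf w) = w := by
  simp only [squash, leavesOf, List.map_map]
  conv_rhs => rw [← List.map_id w]
  apply List.map_congr_left
  intro x _
  rfl

theorem map_shift_leavesOf (c : ℕ) (w : List ℕ) :
    (leavesOf w).map (LTree.shift c) = leavesOf w := by
  simp [leavesOf, List.map_map, Function.comp_def, LTree.shift]

theorem graftForest_leaves : ∀ X : List LTree,
    graftForest X (leavesOf (forestFoliage X)) = X := by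
  intro X
  induction X with
  | nil => rfl
  | cons t ts ih =>
    have e : leavesOf (forestFoliage (t :: ts))
        = leavesOf t.foliage ++ leavesOf (forestFoliage ts) := by
      simp [forestFoliage, leavesOf]
    rw [e]
    show (t.graft _).1 :: graftForest ts (t.graft _).2 = t :: ts
    rw [graft_leaves]
    simp [ih]

theorem forestLen_graftForest : ∀ (X Z : List LTree),
    (forestFoliage X).length = Z.length →
    forestLen (graftForest X Z) = forestLen X + forestLen Z := by
  intro X
  induction X with
  | nil =>
    intro Z h
    have : Z = [] := List.length_eq_zero_iff.mp (by simpa [forestFoliage] using h.symm)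
    subst this; rfl
  | cons t ts ih =>
    intro Z h
    have hl : t.foliage.length + (forestFoliage ts).length = Z.length := by
      simpa [forestFoliage] using h
    have ht1 : t.foliage.length = (Z.take t.foliage.length).length := by
      simp [List.length_take]; omega
    have ht2 : (forestFoliage ts).length = (Z.drop t.foliage.length).length := by
      simp [List.length_drop]; omega
    have p1R : t.graft Z = ((t.graft (Z.take t.foliage.length)).1,
        Z.drop t.foliage.length) := by
      conv_lhs => rw [← List.take_append_drop t.foliage.length Z]
      exact graft_append t _ _ ht1
    show forestLen ((t.graft Z).1 :: graftForest ts (t.graft Z).2) = _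
    rw [p1R]
    have ihh := ih _ ht2
    simp only [forestLen, List.map_cons, List.sum_cons] at ihh ⊢
    rw [numNodes_graft t _ ht1, ihh, List.map_take, List.map_drop]
    have := List.sum_take_add_sum_drop (Z.map LTree.numNodes) t.foliage.length
    omega

theorem all_leaves_of_perm {W : List LTree} {w : List ℕ} (h : W.Perm (leavesOf w)) :
    ∃ u : List ℕ, W = leavesOf u ∧ u.Perm w := by
  refine ⟨W.map LTree.value, ?_, ?_⟩
  · have hall : ∀ t ∈ W, ∃ x, t = LTree.leaf x := by
      intro t ht
      have h2 := h.subset ht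
      simp only [leavesOf, List.mem_map] at h2
      obtain ⟨x, _, rfl⟩ := h2
      exact ⟨x, rfl⟩
    unfold leavesOf
    rw [List.map_map]
    conv_lhs => rw [← List.map_id W]
    apply List.map_congr_left
    intro t ht
    obtain ⟨x, rfl⟩ := hall t ht
    rfl
  · have h2 := h.map LTree.value
    have e : (leavesOf w).map LTree.value = w := squash_leavesOf w
    rwa [e] at h2

theorem nodup_branchWays_leaves (a b m : ℕ) : ∀ w : List ℕ,
    (branchWays a b m (leavesOf w)).Nodup := by
  intro w
  induction w with
  | nil => simp [leavesOf, branchWays]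
  | cons x w ih =>
    show (((branchActTree a b m (LTree.leaf x)).map (· :: leavesOf w)) ++
      ((branchWays a b m (leavesOf w)).map (LTree.leaf x :: ·))).Nodup
    apply List.Nodup.append
    · by_cases hx : x = a + b <;> simp [branchActTree, hx]
    · exact ih.map (fun u v huv => by simpa using huv)
    · intro z h1 h2
      simp only [List.mem_map] at h1 h2
      obtain ⟨u, hu, rfl⟩ := h1
      obtain ⟨u', _, h⟩ := h2
      by_cases hx : x = a + b
      · simp only [branchActTree, if_pos hx, List.mem_singleton] at hu
        subst hu
        simp at h
      · simp [branchActTree, hx] at hu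

theorem mem_branchWays_leaves (a b m : ℕ) : ∀ (w : List ℕ) (Z : List LTree),
    Z ∈ branchWays a b m (leavesOf w) ↔
      ∃ j, ∃ _ : j < w.length, w.getD j 0 = a + b ∧
        Z = (leavesOf w).set j (LTree.node m (LTree.leaf a) (LTree.leaf b)) := by
  intro w
  induction w with
  | nil => intro Z; simp [leavesOf, branchWays]
  | cons x w ih =>
    intro Z
    constructor
    · intro h
      have h' : Z ∈ ((branchActTree a b m (LTree.leaf x)).map (· :: leavesOf w)) ++
          ((branchWays a b m (leavesOf w)).map (LTree.leaf x :: ·)) := h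
      simp only [List.mem_append, List.mem_map] at h'
      rcases h' with ⟨u, hu, rfl⟩ | ⟨u, hu, rfl⟩
      · by_cases hx : x = a + b
        · simp only [branchActTree, if_pos hx, List.mem_singleton] at hu
          subst hu
          exact ⟨0, by simp, by simpa using hx, by simp [leavesOf]⟩
        · simp [branchActTree, hx] at hu
      · obtain ⟨j, hj, hw, rfl⟩ := (ih u).mp hu
        refine ⟨j + 1, by simp; omega, by simpa using hw, ?_⟩
        simp [leavesOf]
    · rintro ⟨j, hj, hw, rfl⟩
      match j with
      | 0 =>
        apply List.mem_append_left
        have hx : x = a + b := by simpa using hw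
        simp [branchActTree, hx, leavesOf]
      | j + 1 =>
        apply List.mem_append_right
        simp only [List.mem_map]
        refine ⟨(leavesOf w).set j (LTree.node m (LTree.leaf a) (LTree.leaf b)), ?_, ?_⟩
        · exact (ih _).mpr ⟨j, by simpa using hj, by simpa using hw, rfl⟩
        · simp [leavesOf]

theorem recover_branch (a b m : ℕ) (w : List ℕ) (Z : List LTree)
    (h : Z ∈ branchWays a b m (leavesOf w)) :
    leavesOf w = Z.map (fun u =>
      if u = LTree.node m (LTree.leaf a) (LTree.leaf b) then LTree.leaf (a + b) else u) := by
  obtain ⟨j, hj, hw, rfl⟩ := (mem_branchWays_leaves a b m w _).mp h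
  have hjl : j < (leavesOf w).length := by simpa [leavesOf] using hj
  have hlw : (leavesOf w)[j] = LTree.leaf (a + b) := by
    show (w.map LTree.leaf)[j] = _
    erw [List.getElem_map]
    have e : w[j] = a + b := by
      rw [← hw]; exact (List.getD_eq_getElem w 0 hj).symm
    rw [e]
  rw [List.map_set]
  have e1 : (leavesOf w).map (fun u =>
      if u = LTree.node m (LTree.leaf a) (LTree.leaf b) then LTree.leaf (a + b) else u)
      = leavesOf w := by
    conv_rhs => rw [← List.map_id (leavesOf w)]
    apply List.map_congr_left
    intro t ht
    simp only [leavesOf, List.mem_map] at ht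
    obtain ⟨y, _, rfl⟩ := ht
    simp
  rw [e1, if_pos rfl, ← hlw, list_set_self _ _ hjl]

section FinsuppLayer
variable (k : Type) [CommSemiring k]

theorem lift_single {α : Type} {M : Type} [AddCommMonoid M] [Module k M]
    (f : α → M) (x : α) (c : k) :
    (Finsupp.lift M k α) f (Finsupp.single x c) = c • f x := by
  rw [Finsupp.lift_apply, Finsupp.sum_single_index]
  rw [zero_smul]

noncomputable def actL1hom (s : ℕ × ℕ) : ((List LTree) →₀ k) →ₗ[k] ((List LTree) →₀ k) :=
  (Finsupp.lift _ k _) (fun X => ((branchWays s.1 s.2 (forestLen X + 1) X).map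
    (fun Y => Finsupp.single Y (1 : k))).sum)

theorem actL1_eq (s : ℕ × ℕ) (x : (List LTree) →₀ k) : actL1 k s x = actL1hom k s x := by
  rw [actL1hom, Finsupp.lift_apply]; rfl

noncomputable def mulLt (X : List LTree) : ((List LTree) →₀ k) →ₗ[k] ((List LTree) →₀ k) :=
  (Finsupp.lift _ k _) (fun Y =>
    if forestFoliage X = squash Y then Finsupp.single (bullet X Y) (1:k) else 0)

noncomputable def mulLhom (g : (List LTree) →₀ k) :
    ((List LTree) →₀ k) →ₗ[k] ((List LTree) →₀ k) :=
  (Finsupp.lift _ k _) (fun X => mulLt k X g)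

theorem mulL_eq (f g : (List LTree) →₀ k) : mulL k f g = mulLhom k g f := by
  rw [mulLhom, Finsupp.lift_apply]
  unfold mulL
  apply Finsupp.sum_congr
  intro X _
  rw [mulLt, Finsupp.lift_apply, Finsupp.smul_sum]
  apply Finsupp.sum_congr
  intro Y _
  split_ifs <;> simp [smul_smul]

theorem actL1_zero (s : ℕ × ℕ) : actL1 k s 0 = 0 := by
  rw [actL1_eq]; exact map_zero _

theorem actL1_add (s : ℕ × ℕ) (x y : (List LTree) →₀ k) :
    actL1 k s (x + y) = actL1 k s x + actL1 k s y := by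
  rw [actL1_eq, actL1_eq, actL1_eq]; exact map_add _ _ _

theorem actL1_smul (s : ℕ × ℕ) (c : k) (x : (List LTree) →₀ k) :
    actL1 k s (c • x) = c • actL1 k s x := by
  rw [actL1_eq, actL1_eq]; exact map_smul _ _ _

theorem actL1_single (s : ℕ × ℕ) (X : List LTree) (c : k) :
    actL1 k s (Finsupp.single X c)
      = c • ((branchWays s.1 s.2 (forestLen X + 1) X).map
          (fun Y => Finsupp.single Y (1 : k))).sum := by
  rw [actL1_eq, actL1hom, lift_single]

theorem mulL_zero_left (g : (List LTree) →₀ k) : mulL k 0 g = 0 := by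
  rw [mulL_eq]; exact map_zero _

theorem mulL_add_left (f₁ f₂ g : (List LTree) →₀ k) :
    mulL k (f₁ + f₂) g = mulL k f₁ g + mulL k f₂ g := by
  rw [mulL_eq, mulL_eq, mulL_eq]; exact map_add _ _ _

theorem mulL_smul_left (c : k) (f g : (List LTree) →₀ k) :
    mulL k (c • f) g = c • mulL k f g := by
  rw [mulL_eq, mulL_eq]; exact map_smul _ _ _

theorem mulL_zero_right (f : (List LTree) →₀ k) : mulL k f 0 = 0 := by
  rw [mulL_eq, mulLhom, Finsupp.lift_apply]
  have : ∀ X : List LTree, mulLt k X (0 : (List LTree) →₀ k) = 0 := fun X => map_zero _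
  simp only [this, smul_zero]
  exact Finset.sum_const_zero

theorem mulL_add_right (f g₁ g₂ : (List LTree) →₀ k) :
    mulL k f (g₁ + g₂) = mulL k f g₁ + mulL k f g₂ := by
  rw [mulL_eq, mulL_eq, mulL_eq, mulLhom, mulLhom, mulLhom,
    Finsupp.lift_apply, Finsupp.lift_apply, Finsupp.lift_apply, ← Finsupp.sum_add]
  apply Finsupp.sum_congr
  intro X _
  rw [map_add, smul_add]

theorem mulL_smul_right (c : k) (f g : (List LTree) →₀ k) :
    mulL k f (c • g) = c • mulL k f g := by
  rw [mulL_eq, mulL_eq, mulLhom, mulLhom, Finsupp.lift_apply, Finsupp.lift_apply,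
    Finsupp.smul_sum]
  apply Finsupp.sum_congr
  intro X _
  rw [map_smul, smul_comm]

theorem mulL_sum_left {ι : Type} (t : Finset ι) (f : ι → (List LTree) →₀ k)
    (g : (List LTree) →₀ k) :
    mulL k (∑ i ∈ t, f i) g = ∑ i ∈ t, mulL k (f i) g := by
  rw [mulL_eq, map_sum]
  exact Finset.sum_congr rfl fun i _ => (mulL_eq k (f i) g).symm

theorem mulL_sum_right {ι : Type} (t : Finset ι) (f : (List LTree) →₀ k)
    (g : ι → (List LTree) →₀ k) :
    mulL k f (∑ i ∈ t, g i) = ∑ i ∈ t, mulL k f (g i) := by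
  classical
  induction t using Finset.induction_on with
  | empty => simp [mulL_zero_right]
  | insert _ _ h ih =>
    rw [Finset.sum_insert h, Finset.sum_insert h, mulL_add_right, ih]

theorem mulL_listsum (f : (List LTree) →₀ k) {α : Type} (L : List α)
    (φ : α → (List LTree) →₀ k) :
    mulL k f ((L.map φ).sum) = (L.map (fun x => mulL k f (φ x))).sum := by
  induction L with
  | nil => simp [mulL_zero_right]
  | cons x L ih => simp only [List.map_cons, List.sum_cons, mulL_add_right, ih]

theorem mulL_single_single (X Y : List LTree) (c d : k) :
    mulL k (Finsupp.single X c) (Finsupp.single Y d)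
      = if forestFoliage X = squash Y then Finsupp.single (bullet X Y) (c * d) else 0 := by
  rw [mulL_eq, mulLhom, lift_single, mulLt, lift_single]
  split_ifs <;> simp [smul_smul, mul_comm]

theorem actL1_mulL_single (s : ℕ × ℕ) (X Y : List LTree) :
    actL1 k s (mulL k (Finsupp.single X (1:k)) (Finsupp.single Y 1))
      = mulL k (Finsupp.single X (1:k)) (actL1 k s (Finsupp.single Y 1)) := by
  rw [actL1_single, one_smul, mulL_listsum]
  by_cases h : forestFoliage X = squash Y
  · rw [mulL_single_single, if_pos h, one_mul]
    rw [actL1_single, one_smul]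
    have hlen : (forestFoliage X).length = (Y.map (LTree.shift (forestLen X))).length := by
      rw [h]; simp [squash]
    have hLb : forestLen (bullet X Y) = forestLen X + forestLen Y := by
      unfold bullet
      rw [forestLen_graftForest _ _ hlen, forestLen_map_shift]
    have hbw : branchWays s.1 s.2 (forestLen (bullet X Y) + 1) (bullet X Y)
        = (branchWays s.1 s.2 (forestLen Y + 1) Y).map (fun Y' => bullet X Y') := by
      rw [hLb]
      show branchWays s.1 s.2 (forestLen X + forestLen Y + 1)
          (graftForest X (Y.map (LTree.shift (forestLen X)))) = _
      rw [branchWays_graftForest _ _ _ _ _ hlen,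
        show forestLen X + forestLen Y + 1 = (forestLen Y + 1) + forestLen X by omega,
        branchWays_shift, List.map_map]
      rfl
    rw [hbw, List.map_map]
    apply congrArg List.sum
    apply List.map_congr_left
    intro Y' hY'
    simp only [Function.comp_apply]
    rw [mulL_single_single, squash_branchWays _ _ _ _ _ hY', if_pos h, one_mul]
  · rw [mulL_single_single, if_neg h, actL1_zero]
    symm
    apply List.sum_eq_zero
    intro x hx
    simp only [List.mem_map] at hx
    obtain ⟨Y', hY', rfl⟩ := hx
    rw [mulL_single_single, squash_branchWays _ _ _ _ _ hY', if_neg h]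

theorem actL1_mulL (s : ℕ × ℕ) (f g : (List LTree) →₀ k) :
    actL1 k s (mulL k f g) = mulL k f (actL1 k s g) := by
  induction f using Finsupp.induction_linear with
  | zero => rw [mulL_zero_left, actL1_zero, mulL_zero_left]
  | add f1 f2 ih1 ih2 => rw [mulL_add_left, actL1_add, ih1, ih2, mulL_add_left]
  | single X c =>
    induction g using Finsupp.induction_linear with
    | zero => rw [mulL_zero_right, actL1_zero, mulL_zero_right]
    | add g1 g2 ih1 ih2 =>
      rw [mulL_add_right, actL1_add, ih1, ih2, actL1_add, mulL_add_right]
    | single Y d =>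
      have e1 : (Finsupp.single X c : (List LTree) →₀ k) = c • Finsupp.single X 1 := by
        rw [Finsupp.smul_single, smul_eq_mul, mul_one]
      have e2 : (Finsupp.single Y d : (List LTree) →₀ k) = d • Finsupp.single Y 1 := by
        rw [Finsupp.smul_single, smul_eq_mul, mul_one]
      rw [e1, e2, mulL_smul_left, mulL_smul_right, actL1_smul, actL1_smul,
        actL1_smul, mulL_smul_right, mulL_smul_left, actL1_mulL_single,
        smul_comm c d]

end FinsuppLayer

section BaseLemma
open List
variable (k : Type) [CommSemiring k]

theorem toList_perm_cons_erase {c : ℕ} {p : Multiset ℕ} (hc : c ∈ p) :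
    p.toList.Perm (c :: (p.erase c).toList) := by
  refine Multiset.coe_eq_coe.mp ?_
  rw [Multiset.coe_toList, ← Multiset.cons_coe, Multiset.coe_toList]
  exact (Multiset.cons_erase hc).symm

theorem toList_applyStep_perm (a b : ℕ) (p : Multiset ℕ) :
    (applyStep a b p).toList.Perm (a :: b :: (p.erase (a+b)).toList) := by
  refine Multiset.coe_eq_coe.mp ?_
  rw [Multiset.coe_toList, ← Multiset.cons_coe, ← Multiset.cons_coe, Multiset.coe_toList]
  rfl

theorem erase_toList_perm (c : ℕ) (p : Multiset ℕ) :
    (p.toList.erase c).Perm ((p.erase c).toList) := by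
  refine Multiset.coe_eq_coe.mp ?_
  rw [← Multiset.coe_erase, Multiset.coe_toList, Multiset.coe_toList]

theorem forestFoliage_edgeForest (a b : ℕ) (p : Multiset ℕ) :
    forestFoliage (edgeForest a b p) = a :: b :: (p.erase (a+b)).toList := by
  have h2 := forestFoliage_leavesOf ((p.erase (a+b)).toList)
  unfold forestFoliage at h2 ⊢
  unfold edgeForest
  rw [List.flatMap_cons, h2]
  rfl

theorem pol_perm {X X' : List LTree} (h : X.Perm X') : pol k X = pol k X' := by
  unfold pol
  congr 1
  ext Z
  simp only [List.mem_toFinset, List.mem_permutations]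
  exact ⟨fun hz => hz.trans h, fun hz => hz.trans h.symm⟩

theorem mulL_pol_edge (a b : ℕ) (p : Multiset ℕ) :
    mulL k (pol k (edgeForest a b p)) (pol k (leavesOf (applyStep a b p).toList))
      = pol k (edgeForest a b p) := by
  classical
  unfold pol
  rw [mulL_sum_left]
  apply Finset.sum_congr rfl
  intro X hX
  rw [mulL_sum_right]
  have hXE : X.Perm (edgeForest a b p) :=
    List.mem_permutations.mp (List.mem_toFinset.mp hX)
  have hfol : (forestFoliage X).Perm ((applyStep a b p).toList) := by
    have h1 : (forestFoliage X).Perm (forestFoliage (edgeForest a b p)) :=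
      List.Perm.flatMap_right LTree.foliage hXE
    rw [forestFoliage_edgeForest] at h1
    exact h1.trans (toList_applyStep_perm a b p).symm
  have hmem : leavesOf (forestFoliage X)
      ∈ (leavesOf (applyStep a b p).toList).permutations.toFinset := by
    rw [List.mem_toFinset, List.mem_permutations]
    exact hfol.map LTree.leaf
  have hsum : ∀ Y ∈ (leavesOf (applyStep a b p).toList).permutations.toFinset,
      mulL k (Finsupp.single X (1:k)) (Finsupp.single Y 1)
        = if Y = leavesOf (forestFoliage X) then Finsupp.single X 1 else 0 := by
    intro Y hY
    have hYp : Y.Perm (leavesOf (applyStep a b p).toList) :=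
      List.mem_permutations.mp (List.mem_toFinset.mp hY)
    obtain ⟨y, rfl, hyl⟩ := all_leaves_of_perm hYp
    rw [mulL_single_single, one_mul, squash_leavesOf]
    by_cases hcond : forestFoliage X = y
    · subst hcond
      have hbul : bullet X (leavesOf (forestFoliage X)) = X := by
        unfold bullet
        rw [map_shift_leavesOf, graftForest_leaves]
      rw [if_pos rfl, if_pos rfl, hbul]
    · rw [if_neg hcond, if_neg]
      intro hyy
      apply hcond
      have hy2 : y = forestFoliage X :=
        ((squash_leavesOf y).symm.trans (congrArg squash hyy)).trans (squash_leavesOf _)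
      exact hy2.symm
  rw [Finset.sum_congr rfl hsum,
    Finset.sum_ite_eq' _ (leavesOf (forestFoliage X)) (fun _ => Finsupp.single X (1:k)),
    if_pos hmem]

theorem branch_perm_edge (a b : ℕ) (p : Multiset ℕ) (W Z : List LTree)
    (hWp : W.Perm (leavesOf p.toList)) (hZ : Z ∈ branchWays a b 1 W) :
    (a + b) ∈ p ∧ Z.Perm (edgeForest a b p) := by
  obtain ⟨w, rfl, hwl⟩ := all_leaves_of_perm hWp
  obtain ⟨j, hj, hwj, rfl⟩ := (mem_branchWays_leaves a b 1 w _).mp hZ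
  have hwjE : w[j] = a + b := by
    rw [← hwj]; exact (List.getD_eq_getElem w 0 hj).symm
  have hcw : a + b ∈ w := hwjE ▸ List.getElem_mem hj
  have hcl : a + b ∈ p.toList := hwl.subset hcw
  have hcp : a + b ∈ p := by rwa [Multiset.mem_toList] at hcl
  refine ⟨hcp, ?_⟩
  have hjl : j < (leavesOf w).length := by simpa [leavesOf] using hj
  have hgj : (leavesOf w)[j] = LTree.leaf (a + b) := by
    show (w.map LTree.leaf)[j] = _
    erw [List.getElem_map, hwjE]
  have h1 : ((leavesOf w).set j (LTree.node 1 (LTree.leaf a) (LTree.leaf b))).Perm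
      (LTree.node 1 (LTree.leaf a) (LTree.leaf b) :: (leavesOf w).eraseIdx j) :=
    perm_set _ _ hjl _
  have h2 : (leavesOf w).Perm (LTree.leaf (a+b) :: (leavesOf w).eraseIdx j) := by
    have := perm_eraseIdx (leavesOf w) j hjl
    rwa [hgj] at this
  have h3 : (leavesOf p.toList).Perm
      (LTree.leaf (a+b) :: leavesOf (p.toList.erase (a+b))) := by
    have := (List.perm_cons_erase hcl).map LTree.leaf
    exact this
  have h4 : (LTree.leaf (a+b) :: (leavesOf w).eraseIdx j).Perm
      (LTree.leaf (a+b) :: leavesOf (p.toList.erase (a+b))) :=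
    h2.symm.trans ((hwl.map LTree.leaf).trans h3)
  have h5 := h4.cons_inv
  have h6 : (p.toList.erase (a+b)).Perm ((p.erase (a+b)).toList) :=
    erase_toList_perm _ _
  exact h1.trans (((h5.trans (h6.map LTree.leaf)).cons _))

theorem exists_branch_of_perm_edge (a b : ℕ) (p : Multiset ℕ) (Z : List LTree)
    (hc : a + b ∈ p) (hZ : Z.Perm (edgeForest a b p)) :
    ∃ W, W.Perm (leavesOf p.toList) ∧ Z ∈ branchWays a b 1 W := by
  classical
  have hNZ : LTree.node 1 (LTree.leaf a) (LTree.leaf b) ∈ Z :=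
    hZ.mem_iff.mpr List.mem_cons_self
  set j := Z.idxOf (LTree.node 1 (LTree.leaf a) (LTree.leaf b)) with hjdef
  have hjZ : j < Z.length := List.idxOf_lt_length_iff.mpr hNZ
  have hZj : Z[j] = LTree.node 1 (LTree.leaf a) (LTree.leaf b) :=
    List.getElem_idxOf hjZ
  have hR : Z.Perm (LTree.node 1 (LTree.leaf a) (LTree.leaf b) :: Z.eraseIdx j) := by
    have := perm_eraseIdx Z j hjZ
    rwa [hZj] at this
  have hRE : (Z.eraseIdx j).Perm (leavesOf ((p.erase (a+b)).toList)) :=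
    (hR.symm.trans hZ).cons_inv
  have hcl : a + b ∈ p.toList := Multiset.mem_toList.mpr hc
  have h6 : ((p.erase (a+b)).toList).Perm (p.toList.erase (a+b)) :=
    (erase_toList_perm _ _).symm
  have hW : (Z.set j (LTree.leaf (a+b))).Perm (leavesOf p.toList) := by
    have h1 : (Z.set j (LTree.leaf (a+b))).Perm (LTree.leaf (a+b) :: Z.eraseIdx j) :=
      perm_set _ _ hjZ _
    have h3 : (leavesOf p.toList).Perm
        (LTree.leaf (a+b) :: leavesOf (p.toList.erase (a+b))) :=
      (List.perm_cons_erase hcl).map LTree.leaf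
    exact h1.trans ((((hRE.trans (h6.map LTree.leaf)).cons _)).trans h3.symm)
  refine ⟨Z.set j (LTree.leaf (a+b)), hW, ?_⟩
  obtain ⟨w, hw, hwl⟩ := all_leaves_of_perm hW
  have hlenw : w.length = Z.length := by
    have e := congrArg List.length hw
    simp only [leavesOf, List.length_map, List.length_set] at e
    exact e.symm
  have hjw : j < w.length := by omega
  have hjlw : j < (leavesOf w).length := by simpa [leavesOf] using hjw
  have e2 : (leavesOf w)[j]'hjlw = LTree.leaf (a+b) := by
    have h0 : (Z.set j (LTree.leaf (a+b)))[j]'(by simpa using hjZ)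
        = (leavesOf w)[j]'hjlw := List.getElem_of_eq hw _
    rw [← h0]
    exact List.getElem_set_self _
  have e1 : (leavesOf w)[j]'hjlw = LTree.leaf (w[j]'hjw) := by
    show (w.map LTree.leaf)[j]'_ = _
    erw [List.getElem_map]
  have hinj : w[j]'hjw = a + b := by
    have := e1.symm.trans e2
    simpa using this
  have hwj : w.getD j 0 = a + b := by
    rw [List.getD_eq_getElem w 0 hjw, hinj]
  rw [hw]
  apply (mem_branchWays_leaves a b 1 w Z).mpr
  refine ⟨j, hjw, hwj, ?_⟩
  rw [← hw, List.set_set, ← hZj, list_set_self _ _ hjZ]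

end BaseLemma

section Final
open List
variable (k : Type) [CommSemiring k]

theorem base_actL1 (s : ℕ × ℕ) (p : Multiset ℕ) :
    actL1 k s (iotaSteps k p []) = if s.1 + s.2 ∈ p then iotaSteps k p [s] else 0 := by
  classical
  show actL1 k s (pol k (leavesOf p.toList)) = _
  have hstep1 : actL1 k s (pol k (leavesOf p.toList))
      = ∑ W ∈ (leavesOf p.toList).permutations.toFinset,
          ∑ Z ∈ (branchWays s.1 s.2 1 W).toFinset, Finsupp.single Z (1:k) := by
    unfold pol
    rw [actL1_eq, map_sum]
    apply Finset.sum_congr rfl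
    intro W hW
    rw [← actL1_eq]
    have hperm : W.Perm (leavesOf p.toList) :=
      List.mem_permutations.mp (List.mem_toFinset.mp hW)
    obtain ⟨w, rfl, hwl⟩ := all_leaves_of_perm hperm
    rw [actL1_single, one_smul, forestLen_leavesOf, zero_add,
      ← List.sum_toFinset _ (nodup_branchWays_leaves s.1 s.2 1 w)]
  have hdisj : Set.PairwiseDisjoint
      ((leavesOf p.toList).permutations.toFinset : Set (List LTree))
      (fun W => (branchWays s.1 s.2 1 W).toFinset) := by
    intro W1 h1 W2 h2 hne
    apply Finset.disjoint_left.mpr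
    intro Z hZ1 hZ2
    apply hne
    have p1 : W1.Perm (leavesOf p.toList) :=
      List.mem_permutations.mp (List.mem_toFinset.mp (Finset.mem_coe.mp h1))
    have p2 : W2.Perm (leavesOf p.toList) :=
      List.mem_permutations.mp (List.mem_toFinset.mp (Finset.mem_coe.mp h2))
    obtain ⟨w1, rfl, _⟩ := all_leaves_of_perm p1
    obtain ⟨w2, rfl, _⟩ := all_leaves_of_perm p2
    rw [recover_branch s.1 s.2 1 w1 Z (List.mem_toFinset.mp hZ1),
        recover_branch s.1 s.2 1 w2 Z (List.mem_toFinset.mp hZ2)]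
  rw [hstep1, ← Finset.sum_biUnion hdisj]
  by_cases hc : s.1 + s.2 ∈ p
  · rw [if_pos hc]
    have hbi : (leavesOf p.toList).permutations.toFinset.biUnion
        (fun W => (branchWays s.1 s.2 1 W).toFinset)
        = (edgeForest s.1 s.2 p).permutations.toFinset := by
      apply Finset.ext
      intro Z
      rw [Finset.mem_biUnion]
      constructor
      · rintro ⟨W, hW, hZ⟩
        rw [List.mem_toFinset, List.mem_permutations]
        exact (branch_perm_edge s.1 s.2 p W Z
          (List.mem_permutations.mp (List.mem_toFinset.mp hW))
          (List.mem_toFinset.mp hZ)).2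
      · intro hZ
        obtain ⟨W, hWp, hZW⟩ := exists_branch_of_perm_edge s.1 s.2 p Z hc
          (List.mem_permutations.mp (List.mem_toFinset.mp hZ))
        exact ⟨W, List.mem_toFinset.mpr (List.mem_permutations.mpr hWp),
          List.mem_toFinset.mpr hZW⟩
    rw [hbi]
    show _ = mulL k (pol k (edgeForest s.1 s.2 p))
        (pol k (leavesOf (applyStep s.1 s.2 p).toList))
    rw [mulL_pol_edge]
    rfl
  · rw [if_neg hc]
    have hbi : (leavesOf p.toList).permutations.toFinset.biUnion
        (fun W => (branchWays s.1 s.2 1 W).toFinset) = ∅ := by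
      apply Finset.eq_empty_of_forall_notMem
      intro Z hZ
      rw [Finset.mem_biUnion] at hZ
      obtain ⟨W, hW, hZW⟩ := hZ
      exact hc (branch_perm_edge s.1 s.2 p W Z
        (List.mem_permutations.mp (List.mem_toFinset.mp hW))
        (List.mem_toFinset.mp hZW)).1
    rw [hbi, Finset.sum_empty]

theorem actL1_iotaSteps (s : ℕ × ℕ) : ∀ (steps : List (ℕ × ℕ)) (p : Multiset ℕ),
    actL1 k s (iotaSteps k p steps)
      = if s.1 + s.2 ∈ sourceAfter p steps then iotaSteps k p (steps ++ [s]) else 0 := by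
  intro steps
  induction steps with
  | nil => intro p; exact base_actL1 k s p
  | cons e rest ih =>
    intro p
    show actL1 k s (mulL k (pol k (edgeForest e.1 e.2 p))
        (iotaSteps k (applyStep e.1 e.2 p) rest)) = _
    rw [actL1_mulL, ih (applyStep e.1 e.2 p)]
    have hsrc : sourceAfter p (e :: rest) = sourceAfter (applyStep e.1 e.2 p) rest := rfl
    rw [hsrc]
    split_ifs with hcond
    · rfl
    · exact mulL_zero_right k _

theorem actQ1_single (s : ℕ × ℕ) (P : QPath) (c : k) :
    actQ1 k s (Finsupp.single P c)
      = if s.1 + s.2 ∈ P.source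
          then Finsupp.single (⟨P.dest, P.steps ++ [s]⟩ : QPath) c else 0 := by
  unfold actQ1
  rw [Finsupp.sum_single_index (by split_ifs <;> simp)]

theorem actQ1_zero (s : ℕ × ℕ) : actQ1 k s 0 = 0 := by
  unfold actQ1; exact Finsupp.sum_zero_index

theorem actQW_zero (w : List (ℕ × ℕ)) : actQW k w 0 = 0 := by
  induction w with
  | nil => rfl
  | cons s r ih =>
    show actQW k r (actQ1 k s 0) = 0
    rw [actQ1_zero]; exact ih

theorem actLW_zero (w : List (ℕ × ℕ)) : actLW k w 0 = 0 := by
  induction w with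
  | nil => rfl
  | cons s r ih =>
    show actLW k r (actL1 k s 0) = 0
    rw [actL1_zero]; exact ih

theorem iotaLinM_single (P : QPath) : iotaLinM k (Finsupp.single P (1:k)) = iotaP k P := by
  unfold iotaLinM
  rw [lift_single, one_smul]

end Final
end IotaAux


/-- **`ι` is a homomorphism of `kℬ*`-modules (Proposition `IotaDHomomorphism`).**
For every path `P` of `Q` and every word `B ∈ ℬ*`, `ι(P.B) = ι(P).B`. -/
theorem iota_branch_equivariant (k : Type) [Field k] [CharZero k]
    (P : QPath) (hP : P.Valid) (B : List (ℕ × ℕ))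
    (hB : ∀ s ∈ B, 0 < s.1 ∧ s.1 < s.2) :
    iotaLinM k (actQW k B (Finsupp.single P 1)) = actLW k B (iotaP k P) := by
  clear hP hB
  induction B generalizing P with
  | nil => exact iotaLinM_single k P
  | cons s B ih =>
    show iotaLinM k (actQW k B (actQ1 k s (Finsupp.single P 1)))
        = actLW k B (actL1 k s (iotaP k P))
    rw [actQ1_single]
    have hcore := actL1_iotaSteps k s P.steps P.dest
    have hs : sourceAfter P.dest P.steps = P.source := rfl
    rw [hs] at hcore
    by_cases hc : s.1 + s.2 ∈ P.source
    · rw [if_pos hc, ih]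
      have e : actL1 k s (iotaP k P) = iotaP k (⟨P.dest, P.steps ++ [s]⟩ : QPath) := by
        show actL1 k s (iotaSteps k P.dest P.steps) = iotaSteps k P.dest (P.steps ++ [s])
        rw [hcore, if_pos hc]
      rw [e]
    · rw [if_neg hc, actQW_zero, map_zero]
      have e : actL1 k s (iotaP k P) = 0 := by
        show actL1 k s (iotaSteps k P.dest P.steps) = 0
        rw [hcore, if_neg hc]
      rw [e, actLW_zero]
end
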